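/- arXiv:2311.05751 — 9 statements merged into one kernel-verified Lean document; each statement's English description precedes it below -/
import Mathlib

section
/- There exists a compact Hausdorff space K that supports no strictly positive measure (there is no Radon measure μ on K with μ(U) > 0 for every nonempty open U ⊆ K), yet no point of K avoids measures: for every x ∈ K there is a Radon measure μ on K with μ({x}) = 0 such that every open set containing x has positive μ-measure. (One such K is the one-point compactification of the disjoint union of ω₁ copies of the unit interval [0,1].) -/
open MeasureTheory Topology ENNReal NNReal

/-- A *Radon measure* on a topological space: a σ-additive Borel probability measure which is
inner regular with respect to compact sets and outer regular with respect to open sets. -/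
def IsRadon {X : Type*} [TopologicalSpace X] [MeasurableSpace X] (μ : Measure X) : Prop :=
  IsProbabilityMeasure μ ∧ μ.InnerRegularWRT IsCompact MeasurableSet ∧ μ.OuterRegular

/-- A point `x` *avoids measures* if for every Radon measure `μ` with `μ {x} = 0` there is an
open neighbourhood of `x` of measure zero. -/
def AvoidsMeasures {X : Type*} [TopologicalSpace X] [MeasurableSpace X] (x : X) : Prop :=
  ∀ μ : Measure X, IsRadon μ → μ {x} = 0 → ∃ U : Set X, IsOpen U ∧ x ∈ U ∧ μ U = 0

/-- A point `x` is a *μ-point* if it avoids all non-atomic Radon measures. -/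
def IsMuPoint {X : Type*} [TopologicalSpace X] [MeasurableSpace X] (x : X) : Prop :=
  ∀ μ : Measure X, IsRadon μ → (∀ y : X, μ {y} = 0) →
    ∃ U : Set X, IsOpen U ∧ x ∈ U ∧ μ U = 0

/-- A point `p` is a *weak P-point* if it is not in the closure of any countable subset of
`X \ {p}`. -/
def IsWeakPPoint {X : Type*} [TopologicalSpace X] (p : X) : Prop :=
  ∀ C : Set X, C.Countable → p ∉ C → p ∉ closure C

section Construction

open Set OnePoint unitInterval

/-- An uncountable discrete index type. -/
structure MyIdx : Type where val : ℝ

instance : TopologicalSpace MyIdx := ⊥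
instance : DiscreteTopology MyIdx := ⟨rfl⟩
instance : Uncountable MyIdx :=
  Function.Injective.uncountable (f := MyIdx.mk) fun _ _ h => congrArg MyIdx.val h

/-- The one-point compactification of the disjoint union of uncountably many copies of `[0,1]`. -/
abbrev KSp : Type := OnePoint (MyIdx × I)

noncomputable instance : MeasurableSpace KSp := borel KSp
instance : BorelSpace KSp := ⟨rfl⟩

/-- The embedding of the `i`-th copy of the unit interval. -/
def copyMap (i : MyIdx) : I → KSp := fun x => (((i, x) : MyIdx × I) : KSp)

lemma continuous_copyMap (i : MyIdx) : Continuous (copyMap i) :=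
  OnePoint.continuous_coe.comp (continuous_const.prodMk continuous_id)

lemma injective_copyMap (i : MyIdx) : Function.Injective (copyMap i) := by
  intro a b h
  have := OnePoint.coe_injective h
  exact congrArg Prod.snd this

/-- Lebesgue measure transported to the `i`-th copy. -/
noncomputable def copyMeasure (i : MyIdx) : Measure KSp :=
  Measure.map (copyMap i) volume

/-- Nonempty open subsets of the unit interval have positive volume. -/
lemma unit_open_pos {V : Set I} (hV : IsOpen V) {t : I} (ht : t ∈ V) :
    0 < volume V := by
  rw [isOpen_induced_iff] at hV
  obtain ⟨W, hW, rfl⟩ := hV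
  obtain ⟨ε, hε, hball⟩ := Metric.isOpen_iff.1 hW t.val ht
  set a := max 0 (t.val - ε) with ha
  set b := min 1 (t.val + ε) with hb
  have htI : t.val ∈ Set.Icc (0:ℝ) 1 := t.2
  have hab : a < b := by
    apply max_lt
    · exact lt_min one_pos (lt_of_le_of_lt htI.1 (lt_add_of_pos_right _ hε))
    · exact lt_min (lt_of_lt_of_le (sub_lt_self _ hε) htI.2)
        (sub_lt_iff_lt_add.2 (lt_add_of_lt_of_pos (lt_add_of_pos_right _ hε) hε))
  have hsub : Set.Ioo a b ⊆ W ∩ Set.Icc 0 1 := by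
    intro y hy
    refine ⟨hball ?_, le_of_lt (lt_of_le_of_lt (le_max_left 0 _) hy.1),
      le_of_lt (lt_of_lt_of_le hy.2 (min_le_left _ _))⟩
    rw [Real.ball_eq_Ioo]
    exact ⟨lt_of_le_of_lt (le_max_right 0 _) hy.1, lt_of_lt_of_le hy.2 (min_le_right _ _)⟩
  have key : volume (Subtype.val '' (Subtype.val ⁻¹' W : Set I)) ≥ volume (Set.Ioo a b) := by
    apply measure_mono
    rw [Subtype.image_preimage_coe]
    exact fun y hy => ⟨(hsub hy).2, (hsub hy).1⟩
  have hv : volume (Subtype.val ⁻¹' W : Set I) = volume (Subtype.val '' (Subtype.val ⁻¹' W : Set I)) := by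
    rw [unitInterval.volume_def,
      MeasurableEmbedding.comap_apply (MeasurableEmbedding.subtype_coe measurableSet_Icc)]
  rw [hv]
  refine lt_of_lt_of_le ?_ key
  rw [Real.volume_Ioo]
  exact ENNReal.ofReal_pos.2 (sub_pos.2 hab)

lemma unit_singleton_zero (t : I) : volume ({t} : Set I) = 0 := by
  rw [unitInterval.volume_def,
    MeasurableEmbedding.comap_apply (MeasurableEmbedding.subtype_coe measurableSet_Icc),
    Set.image_singleton, Real.volume_singleton]

/-- Bundling lemma: on our compact Hausdorff space, a probability measure which is inner
regular is Radon. -/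
lemma isRadon_of_innerRegular (μ : Measure KSp) (hp : IsProbabilityMeasure μ)
    (hi : μ.InnerRegular) : IsRadon μ := by
  haveI := hp; haveI := hi
  exact ⟨hp, hi.innerRegular, inferInstance⟩

lemma innerRegular_copyMeasure (i : MyIdx) : (copyMeasure i).InnerRegular :=
  Measure.InnerRegular.map_of_continuous (continuous_copyMap i)

lemma isProbabilityMeasure_copyMeasure (i : MyIdx) : IsProbabilityMeasure (copyMeasure i) :=
  Measure.isProbabilityMeasure_map (continuous_copyMap i).measurable.aemeasurable

lemma copyMeasure_apply (i : MyIdx) {s : Set KSp} (hs : MeasurableSet s) :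
    copyMeasure i s = volume (copyMap i ⁻¹' s) :=
  Measure.map_apply (continuous_copyMap i).measurable hs

/-- The measure of a singleton in a copy is zero. -/
lemma copyMeasure_singleton (i : MyIdx) (t : I) :
    copyMeasure i {(((i, t) : MyIdx × I) : KSp)} = 0 := by
  rw [copyMeasure_apply i (measurableSet_singleton _)]
  have : copyMap i ⁻¹' {(((i, t) : MyIdx × I) : KSp)} = {t} := by
    ext x
    simp only [copyMap, Set.mem_preimage, Set.mem_singleton_iff]
    constructor
    · intro h
      have := OnePoint.coe_injective h
      exact congrArg Prod.snd this
    · rintro rfl; rfl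
  rw [this, unit_singleton_zero]

/-- The `i`-th copy of the interval inside `KSp`. -/
def copySet (i : MyIdx) : Set KSp := ((↑) : MyIdx × I → KSp) '' ({i} ×ˢ (Set.univ : Set I))

lemma isOpen_copySet (i : MyIdx) : IsOpen (copySet i) :=
  OnePoint.isOpen_image_coe.2 ((isOpen_discrete _).prod isOpen_univ)

lemma disjoint_copySet : Pairwise (Function.onFun Disjoint copySet) := by
  intro i j hij
  refine Set.disjoint_left.2 ?_
  rintro z ⟨⟨a, b⟩, ⟨ha, -⟩, rfl⟩ ⟨⟨c, d⟩, ⟨hc, -⟩, hcd⟩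
  rcases Set.mem_singleton_iff.1 ha with rfl
  rcases Set.mem_singleton_iff.1 hc with rfl
  have := OnePoint.coe_injective hcd
  exact hij (congrArg Prod.fst this).symm

lemma nonempty_copySet (i : MyIdx) : (copySet i).Nonempty :=
  ⟨_, ⟨(i, 0), ⟨rfl, Set.mem_univ _⟩, rfl⟩⟩

/-- A fixed sequence of distinct indices. -/
def aSeq : ℕ → MyIdx := fun n => ⟨(n : ℝ)⟩

lemma injective_aSeq : Function.Injective aSeq := fun a b h =>
  Nat.cast_injective (congrArg MyIdx.val h)

/-- The geometric probability measure on `ℕ`. -/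
noncomputable def natMeasure : Measure ℕ :=
  Measure.sum (fun n => ((2 : ℝ≥0∞)⁻¹ ^ (n + 1)) • Measure.dirac n)

lemma tsum_geom_half : ∑' n : ℕ, ((2 : ℝ≥0∞)⁻¹ ^ (n + 1)) = 1 := by
  have h1 : ∑' n : ℕ, ((2 : ℝ≥0∞)⁻¹ ^ (n + 1)) = (∑' n : ℕ, (2 : ℝ≥0∞)⁻¹ ^ n) * 2⁻¹ := by
    rw [← ENNReal.tsum_mul_right]
    exact tsum_congr fun n => pow_succ _ _
  rw [h1, ENNReal.tsum_geometric, ENNReal.one_sub_inv_two, inv_inv]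
  exact ENNReal.mul_inv_cancel (by norm_num) (by norm_num)

lemma natMeasure_apply (s : Set ℕ) :
    natMeasure s = ∑' n, ((2 : ℝ≥0∞)⁻¹ ^ (n + 1)) * Measure.dirac n s := by
  rw [natMeasure, Measure.sum_apply _ (by trivial)]
  rfl

instance : IsProbabilityMeasure natMeasure := by
  constructor
  rw [natMeasure_apply]
  simp only [measure_univ, mul_one]
  exact tsum_geom_half

lemma natMeasure_singleton (n : ℕ) :
    ((2 : ℝ≥0∞)⁻¹ ^ (n + 1)) ≤ natMeasure {n} := by
  rw [natMeasure_apply]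
  have := ENNReal.le_tsum (f := fun m => ((2 : ℝ≥0∞)⁻¹ ^ (m + 1)) * Measure.dirac m {n}) n
  simpa using this

/-- The base measure on `ℕ × I`. -/
noncomputable def baseMeasure : Measure (ℕ × I) := natMeasure.prod volume

instance : IsProbabilityMeasure baseMeasure := by
  unfold baseMeasure; infer_instance

/-- The map sending `ℕ × I` into the copies indexed by `aSeq`. -/
def inftyMap : ℕ × I → KSp := fun p => (((aSeq p.1, p.2) : MyIdx × I) : KSp)

lemma continuous_inftyMap : Continuous inftyMap :=
  OnePoint.continuous_coe.comp
    (((continuous_of_discreteTopology (f := aSeq)).comp continuous_fst).prodMk continuous_snd)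

/-- The measure witnessing that `∞` does not avoid measures. -/
noncomputable def inftyMeasure : Measure KSp := Measure.map inftyMap baseMeasure

lemma innerRegular_inftyMeasure : inftyMeasure.InnerRegular :=
  Measure.InnerRegular.map_of_continuous continuous_inftyMap

lemma isProbabilityMeasure_inftyMeasure : IsProbabilityMeasure inftyMeasure :=
  Measure.isProbabilityMeasure_map continuous_inftyMap.measurable.aemeasurable

lemma inftyMeasure_apply {s : Set KSp} (hs : MeasurableSet s) :
    inftyMeasure s = baseMeasure (inftyMap ⁻¹' s) :=
  Measure.map_apply continuous_inftyMap.measurable hs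

lemma inftyMeasure_singleton : inftyMeasure {(∞ : KSp)} = 0 := by
  rw [inftyMeasure_apply (measurableSet_singleton _)]
  have : inftyMap ⁻¹' {(∞ : KSp)} = ∅ := by
    ext p
    simp only [inftyMap, Set.mem_preimage, Set.mem_singleton_iff, Set.mem_empty_iff_false,
      iff_false]
    exact OnePoint.coe_ne_infty _
  rw [this, measure_empty]

/-- Every open neighbourhood of `∞` has positive `inftyMeasure`. -/
lemma inftyMeasure_pos {U : Set KSp} (hU : IsOpen U) (hmem : (∞ : KSp) ∈ U) :
    0 < inftyMeasure U := by
  obtain ⟨hcomp, -⟩ := (OnePoint.isOpen_iff_of_mem' hmem).1 hU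
  -- the compact complement meets only finitely many copies
  have hFfin : (Prod.fst '' ((((↑) : MyIdx × I → KSp) ⁻¹' U)ᶜ)).Finite :=
    IsCompact.finite (hcomp.image continuous_fst) ⟨inferInstance⟩
  -- choose an index not meeting the complement
  obtain ⟨n, hn⟩ : ∃ n, aSeq n ∉ Prod.fst '' ((((↑) : MyIdx × I → KSp) ⁻¹' U)ᶜ) := by
    have hpre : (aSeq ⁻¹' (Prod.fst '' ((((↑) : MyIdx × I → KSp) ⁻¹' U)ᶜ))).Finite :=
      hFfin.preimage (Set.injOn_of_injective injective_aSeq)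
    obtain ⟨n, hn⟩ := hpre.infinite_compl.nonempty
    exact ⟨n, hn⟩
  have hsub : ({n} ×ˢ (Set.univ : Set I)) ⊆ inftyMap ⁻¹' U := by
    rintro ⟨m, x⟩ ⟨hm, -⟩
    rcases Set.mem_singleton_iff.1 hm with rfl
    show (((aSeq m, x) : MyIdx × I) : KSp) ∈ U
    by_contra hnot
    exact hn ⟨(aSeq m, x), hnot, rfl⟩
  have hle : natMeasure {n} * volume (Set.univ : Set I) ≤ inftyMeasure U := by
    rw [inftyMeasure_apply hU.measurableSet, ← Measure.prod_prod]
    exact measure_mono hsub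
  calc (0:ℝ≥0∞) < (2 : ℝ≥0∞)⁻¹ ^ (n + 1) := by
        exact ENNReal.pow_pos (ENNReal.inv_pos.2 ENNReal.ofNat_ne_top) _
    _ ≤ natMeasure {n} * volume (Set.univ : Set I) := by
        rw [measure_univ, mul_one]; exact natMeasure_singleton n
    _ ≤ inftyMeasure U := hle


/-- There is a compact Hausdorff space `K` supporting no strictly positive
Radon measure, in which nevertheless no point avoids measures: every `x ∈ K` lies in the
support of a Radon measure vanishing on `{x}`. -/
theorem exists_space_no_strictly_positive_measure_no_point_avoiding :
    ∃ (K : Type) (tK : TopologicalSpace K) (mK : MeasurableSpace K),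
      @BorelSpace K tK mK ∧ @CompactSpace K tK ∧ @T2Space K tK ∧
      (¬ ∃ μ : @Measure K mK, @IsRadon K tK mK μ ∧
        ∀ U : Set K, @IsOpen K tK U → U.Nonempty → 0 < μ U) ∧
      (∀ x : K, ∃ μ : @Measure K mK, @IsRadon K tK mK μ ∧ μ {x} = 0 ∧
        ∀ U : Set K, @IsOpen K tK U → x ∈ U → 0 < μ U) := by
  classical
  refine ⟨KSp, inferInstance, inferInstance, inferInstance, inferInstance, inferInstance, ?_, ?_⟩
  · -- no strictly positive Radon measure
    rintro ⟨μ, ⟨hp, -, -⟩, hpos⟩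
    haveI := hp
    have hcnt := MeasureTheory.Measure.countable_meas_pos_of_disjoint_of_meas_iUnion_ne_top μ
      (fun i => (isOpen_copySet i).measurableSet) disjoint_copySet (measure_ne_top μ _)
    have huniv : {i : MyIdx | 0 < μ (copySet i)} = Set.univ :=
      Set.eq_univ_of_forall fun i => hpos _ (isOpen_copySet i) (nonempty_copySet i)
    rw [huniv] at hcnt
    exact not_countable (Set.countable_univ_iff.1 hcnt)
  · -- every point is in the support of a Radon measure vanishing at it
    intro x
    induction x using OnePoint.rec with
    | infty =>
      refine ⟨inftyMeasure,
        isRadon_of_innerRegular _ isProbabilityMeasure_inftyMeasure innerRegular_inftyMeasure,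
        inftyMeasure_singleton, fun U hU hmem => inftyMeasure_pos hU hmem⟩
    | coe p =>
      obtain ⟨i, t⟩ := p
      refine ⟨copyMeasure i,
        isRadon_of_innerRegular _ (isProbabilityMeasure_copyMeasure i)
          (innerRegular_copyMeasure i),
        copyMeasure_singleton i t, fun U hU hmem => ?_⟩
      rw [copyMeasure_apply i hU.measurableSet]
      exact unit_open_pos ((continuous_copyMap i).isOpen_preimage U hU)
        (show t ∈ copyMap i ⁻¹' U from hmem)

end Construction
end

section
/- If p is a P-point of a topological space X, then p avoids measures: for every Radon measure μ on X with μ({p}) = 0 there is an open set U ∋ p with μ(U) = 0. -/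
open MeasureTheory Topology ENNReal NNReal

/-- A point `p` is a *P-point* if every countable intersection of open neighbourhoods of `p`
contains an open neighbourhood of `p`. -/
def IsPPoint {X : Type*} [TopologicalSpace X] (p : X) : Prop :=
  ∀ U : ℕ → Set X, (∀ n, IsOpen (U n) ∧ p ∈ U n) →
    ∃ V : Set X, IsOpen V ∧ p ∈ V ∧ V ⊆ ⋂ n, U n

/-- If `p` is a P-point of a topological space `X`, then `p` avoids measures. -/
theorem avoidsMeasures_of_isPPoint {X : Type*} [TopologicalSpace X] [MeasurableSpace X]
    [BorelSpace X] (p : X) (hp : IsPPoint p) : AvoidsMeasures p := by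
  intro μ ⟨_, _, hreg⟩ hμp
  have hU : ∀ n : ℕ, ∃ U : Set X, {p} ⊆ U ∧ IsOpen U ∧ μ U < (n : ℝ≥0∞)⁻¹ := by
    intro n
    refine Set.exists_isOpen_lt_of_lt _ _ ?_
    rw [hμp]
    simp [pos_iff_ne_zero]
  choose U hUp hUo hUlt using hU
  obtain ⟨V, hVo, hpV, hVsub⟩ := hp U fun n => ⟨hUo n, hUp n rfl⟩
  refine ⟨V, hVo, hpV, ?_⟩
  by_contra h
  obtain ⟨n, hn⟩ := ENNReal.exists_inv_nat_lt h
  exact absurd ((hn.trans_le (μ.mono (hVsub.trans (Set.iInter_subset _ n)))).trans (hUlt n))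
    (lt_irrefl _)
end

section
/- In any topological space X, a μ-point cannot be a limit point of a countable set of non-μ-points: if A = {a_n : n ∈ ω} ⊆ X and no a_n is a μ-point, then every point p ∈ closure(A) \ A fails to be a μ-point (there is a non-atomic Radon measure μ on X such that every open set containing p has positive μ-measure). -/
open MeasureTheory Topology ENNReal NNReal

/-- In a topological space `X`, a μ-point cannot be a limit point of a
countable set of non-μ-points: if `A = {a n : n ∈ ω}` consists of non-μ-points, then every
`p ∈ closure A \ A` fails to be a μ-point, as witnessed by a non-atomic Radon measure all of
whose open neighbourhoods of `p` have positive measure. -/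
theorem muPoint_not_limit_of_non_muPoints {X : Type*} [TopologicalSpace X] [MeasurableSpace X]
    [BorelSpace X] (a : ℕ → X) (ha : ∀ n, ¬ IsMuPoint (a n))
    (p : X) (hp : p ∈ closure (Set.range a)) (hpA : p ∉ Set.range a) :
    ∃ μ : Measure X, IsRadon μ ∧ (∀ y : X, μ {y} = 0) ∧
      ∀ U : Set X, IsOpen U → p ∈ U → 0 < μ U := by
  -- choose witnessing measures for each non-μ-point
  have hch : ∀ n, ∃ ν : Measure X, IsRadon ν ∧ (∀ y : X, ν {y} = 0) ∧
      ∀ U : Set X, IsOpen U → a n ∈ U → ν U ≠ 0 := by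
    intro n
    have h := ha n
    unfold IsMuPoint at h
    push_neg at h
    exact h
  choose ν hRadon hNA hposν using hch
  have hprob : ∀ n, IsProbabilityMeasure (ν n) := fun n => (hRadon n).1
  have hinner : ∀ n, (ν n).InnerRegularWRT IsCompact MeasurableSet := fun n => (hRadon n).2.1
  have houter : ∀ n, (ν n).OuterRegular := fun n => (hRadon n).2.2
  set c : ℕ → ℝ≥0∞ := fun n => 2⁻¹ ^ (n + 1) with hc
  have h2ne0 : (2⁻¹ : ℝ≥0∞) ≠ 0 := by simp
  have hcsum : ∑' n, c n = 1 := by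
    rw [show (∑' n, c n) = ∑' n : ℕ, (2⁻¹ : ℝ≥0∞) ^ (n + 1) from rfl,
      ENNReal.tsum_geometric_add_one, ENNReal.one_sub_inv_two]
    exact ENNReal.mul_inv_cancel h2ne0 (by simp)
  have hcle1 : ∀ n, c n ≤ 1 := fun n => hcsum ▸ ENNReal.le_tsum n
  have hcne0 : ∀ n, c n ≠ 0 := fun n => pow_ne_zero _ h2ne0
  have htail : ∀ N, ∑' n, c (n + N) = (2⁻¹ : ℝ≥0∞) ^ N := by
    intro N
    calc ∑' n, c (n + N) = ∑' n, (2⁻¹ : ℝ≥0∞) ^ N * c n := by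
          refine tsum_congr fun n => ?_
          show (2⁻¹ : ℝ≥0∞) ^ (n + N + 1) = (2⁻¹ : ℝ≥0∞) ^ N * (2⁻¹ : ℝ≥0∞) ^ (n + 1)
          rw [← pow_add]
          ring_nf
      _ = (2⁻¹ : ℝ≥0∞) ^ N := by rw [ENNReal.tsum_mul_left, hcsum, mul_one]
  set μ : Measure X := Measure.sum (fun n => c n • ν n) with hμ
  have happ : ∀ {s : Set X}, MeasurableSet s → μ s = ∑' n, c n * ν n s := by
    intro s hs
    rw [hμ, Measure.sum_apply _ hs]
    simp [Measure.smul_apply, smul_eq_mul]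
  have hν1 : ∀ n (s : Set X), ν n s ≤ 1 := by
    intro n s
    haveI := hprob n
    exact prob_le_one
  -- key approximation : open sets around any set with almost the same weighted sum
  have key : ∀ (A : Set X) (r : ℝ≥0∞), (∑' n, c n * ν n A) < r →
      ∃ U, A ⊆ U ∧ IsOpen U ∧ (∑' n, c n * ν n U) < r := by
    intro A r hr
    obtain ⟨ε, hε0, hεr⟩ := ENNReal.lt_iff_exists_add_pos_lt.mp hr
    have hε'0 : (ε : ℝ≥0∞) ≠ 0 := by exact_mod_cast hε0.ne'
    have hhalf : ((ε : ℝ≥0∞) / 2) ≠ 0 := by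
      simp [ENNReal.div_eq_zero_iff, hε'0]
    obtain ⟨N, hN⟩ := ENNReal.exists_inv_two_pow_lt hhalf
    have hchoice : ∀ n, ∃ U, A ⊆ U ∧ IsOpen U ∧
        ν n U < ν n A + (2⁻¹ : ℝ≥0∞) ^ (n + 1) * ((ε : ℝ≥0∞) / 2) := by
      intro n
      haveI := hprob n
      haveI := houter n
      exact Set.exists_isOpen_lt_add A (measure_ne_top _ _)
        (mul_ne_zero (pow_ne_zero _ h2ne0) hhalf)
    choose U hAU hUopen hUlt using hchoice
    refine ⟨⋂ n ∈ Finset.range N, U n, Set.subset_iInter₂ fun n _ => hAU n,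
      isOpen_biInter_finset (fun n _ => hUopen n), ?_⟩
    set V := ⋂ n ∈ Finset.range N, U n with hV
    have hsplit : ∑' n, c n * ν n V
        = ∑ n ∈ Finset.range N, c n * ν n V + ∑' n, c (n + N) * ν (n + N) V :=
      (Summable.sum_add_tsum_nat_add' (f := fun n => c n * ν n V) (k := N) ENNReal.summable).symm
    calc ∑' n, c n * ν n V
        = ∑ n ∈ Finset.range N, c n * ν n V + ∑' n, c (n + N) * ν (n + N) V := hsplit
      _ ≤ ∑ n ∈ Finset.range N, c n * ν n (U n) + ∑' n, c (n + N) := by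
          refine add_le_add (Finset.sum_le_sum fun n hn => ?_)
            (ENNReal.tsum_le_tsum fun n => ?_)
          · exact mul_le_mul_right (measure_mono (Set.biInter_subset_of_mem hn)) _
          · exact le_trans (mul_le_mul_right (hν1 _ _) _) (le_of_eq (mul_one _))
      _ ≤ ∑ n ∈ Finset.range N, (c n * ν n A + (2⁻¹ : ℝ≥0∞) ^ (n + 1) * ((ε : ℝ≥0∞) / 2))
            + (2⁻¹ : ℝ≥0∞) ^ N := by
          rw [htail N]
          gcongr with n hn
          calc c n * ν n (U n)
              ≤ c n * (ν n A + (2⁻¹ : ℝ≥0∞) ^ (n + 1) * ((ε : ℝ≥0∞) / 2)) := by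
                gcongr
                exact (hUlt n).le
            _ = c n * ν n A + c n * ((2⁻¹ : ℝ≥0∞) ^ (n + 1) * ((ε : ℝ≥0∞) / 2)) := mul_add _ _ _
            _ ≤ c n * ν n A + 1 * ((2⁻¹ : ℝ≥0∞) ^ (n + 1) * ((ε : ℝ≥0∞) / 2)) := by
                gcongr
                exact hcle1 n
            _ = c n * ν n A + (2⁻¹ : ℝ≥0∞) ^ (n + 1) * ((ε : ℝ≥0∞) / 2) := by rw [one_mul]
      _ ≤ (∑' n, c n * ν n A) + (ε : ℝ≥0∞) / 2 + (ε : ℝ≥0∞) / 2 := by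
          rw [Finset.sum_add_distrib]
          have h1 : ∑ n ∈ Finset.range N, c n * ν n A ≤ ∑' n, c n * ν n A :=
            ENNReal.sum_le_tsum _
          have h2 : ∑ n ∈ Finset.range N, (2⁻¹ : ℝ≥0∞) ^ (n + 1) * ((ε : ℝ≥0∞) / 2)
              ≤ (ε : ℝ≥0∞) / 2 := by
            rw [← Finset.sum_mul]
            calc (∑ n ∈ Finset.range N, (2⁻¹ : ℝ≥0∞) ^ (n + 1)) * ((ε : ℝ≥0∞) / 2)
                ≤ 1 * ((ε : ℝ≥0∞) / 2) := by
                  gcongr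
                  exact hcsum ▸ ENNReal.sum_le_tsum _
              _ = (ε : ℝ≥0∞) / 2 := one_mul _
          exact add_le_add (add_le_add h1 h2) hN.le
      _ = (∑' n, c n * ν n A) + (ε : ℝ≥0∞) := by rw [add_assoc, ENNReal.add_halves]
      _ < r := hεr
  -- μ is a probability measure
  have hprobμ : IsProbabilityMeasure μ := by
    constructor
    rw [happ MeasurableSet.univ]
    calc ∑' n, c n * ν n Set.univ = ∑' n, c n := by
          refine tsum_congr fun n => ?_
          haveI := hprob n
          rw [measure_univ, mul_one]
      _ = 1 := hcsum
  -- μ is outer regular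
  have houterμ : μ.OuterRegular := by
    constructor
    intro A hA r hr
    rw [happ hA] at hr
    obtain ⟨V, hAV, hVo, hV⟩ := key A r hr
    exact ⟨V, hAV, hVo, by rwa [happ hVo.measurableSet]⟩
  -- μ is inner regular w.r.t. compact sets
  have hinnerμ : μ.InnerRegularWRT IsCompact MeasurableSet := by
    intro A hA r hr
    rw [happ hA, ENNReal.tsum_eq_iSup_sum] at hr
    obtain ⟨s, hs⟩ := lt_iSup_iff.mp hr
    obtain ⟨ε, hε0, hεs⟩ := ENNReal.lt_iff_exists_add_pos_lt.mp hs
    have hε'0 : (ε : ℝ≥0∞) ≠ 0 := by exact_mod_cast hε0.ne'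
    have hchoice : ∀ n : ℕ, ∃ K, K ⊆ A ∧ IsCompact K ∧
        ν n A < ν n K + (2⁻¹ : ℝ≥0∞) ^ (n + 1) * (ε : ℝ≥0∞) := by
      intro n
      haveI := hprob n
      exact (hinner n).exists_subset_lt_add isCompact_empty hA (measure_ne_top _ _)
        (mul_ne_zero (pow_ne_zero _ h2ne0) hε'0)
    choose K hKA hKc hKlt using hchoice
    refine ⟨⋃ n ∈ s, K n, Set.iUnion₂_subset fun n _ => hKA n,
      s.isCompact_biUnion (fun n _ => hKc n), ?_⟩
    have h1 : ∑ n ∈ s, c n * ν n A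
        ≤ ∑ n ∈ s, c n * ν n (⋃ m ∈ s, K m) + (ε : ℝ≥0∞) := by
      calc ∑ n ∈ s, c n * ν n A
          ≤ ∑ n ∈ s, (c n * ν n (⋃ m ∈ s, K m) + (2⁻¹ : ℝ≥0∞) ^ (n + 1) * (ε : ℝ≥0∞)) := by
            refine Finset.sum_le_sum fun n hn => ?_
            calc c n * ν n A
                ≤ c n * (ν n (K n) + (2⁻¹ : ℝ≥0∞) ^ (n + 1) * (ε : ℝ≥0∞)) := by
                  gcongr
                  exact (hKlt n).le
              _ = c n * ν n (K n) + c n * ((2⁻¹ : ℝ≥0∞) ^ (n + 1) * (ε : ℝ≥0∞)) := mul_add _ _ _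
              _ ≤ c n * ν n (⋃ m ∈ s, K m) + 1 * ((2⁻¹ : ℝ≥0∞) ^ (n + 1) * (ε : ℝ≥0∞)) :=
                  add_le_add
                    (mul_le_mul_right
                      (measure_mono (Set.subset_biUnion_of_mem (u := fun m => (K m : Set X)) hn)) _)
                    (mul_le_mul_left (hcle1 n) _)
              _ = c n * ν n (⋃ m ∈ s, K m) + (2⁻¹ : ℝ≥0∞) ^ (n + 1) * (ε : ℝ≥0∞) := by
                  rw [one_mul]
        _ = ∑ n ∈ s, c n * ν n (⋃ m ∈ s, K m)
              + ∑ n ∈ s, (2⁻¹ : ℝ≥0∞) ^ (n + 1) * (ε : ℝ≥0∞) := Finset.sum_add_distrib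
        _ ≤ ∑ n ∈ s, c n * ν n (⋃ m ∈ s, K m) + (ε : ℝ≥0∞) := by
            gcongr
            rw [← Finset.sum_mul]
            calc (∑ n ∈ s, (2⁻¹ : ℝ≥0∞) ^ (n + 1)) * (ε : ℝ≥0∞)
                ≤ 1 * (ε : ℝ≥0∞) := by
                  gcongr
                  exact hcsum ▸ ENNReal.sum_le_tsum _
              _ = (ε : ℝ≥0∞) := one_mul _
    have h2 : ∑ n ∈ s, c n * ν n (⋃ m ∈ s, K m) ≤ μ (⋃ m ∈ s, K m) := by
      refine le_trans ?_ (Measure.le_sum_apply _ _)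
      refine le_trans (le_of_eq ?_) (ENNReal.sum_le_tsum s)
      exact Finset.sum_congr rfl fun n _ => by
        simp [Measure.smul_apply, smul_eq_mul]
    have hfinal : r + (ε : ℝ≥0∞) < μ (⋃ m ∈ s, K m) + (ε : ℝ≥0∞) :=
      hεs.trans_le (h1.trans (add_le_add_left h2 _))
    exact (ENNReal.add_lt_add_iff_right ENNReal.coe_ne_top).mp hfinal
  -- μ is non-atomic
  have hNAμ : ∀ y : X, μ {y} = 0 := by
    intro y
    by_contra h
    have h0 : (∑' n, c n * ν n {y}) = 0 := by simp [hNA]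
    obtain ⟨V, hyV, hVo, hV⟩ := key {y} (μ {y}) (by rw [h0]; exact pos_iff_ne_zero.mpr h)
    have hlt : μ V < μ {y} := by rwa [happ hVo.measurableSet]
    exact absurd (measure_mono hyV) (not_le.mpr hlt)
  refine ⟨μ, ⟨hprobμ, hinnerμ, houterμ⟩, hNAμ, ?_⟩
  intro U hUo hpU
  obtain ⟨x, hxU, hxA⟩ := mem_closure_iff.mp hp U hUo hpU
  obtain ⟨n, rfl⟩ := hxA
  have hle : c n * ν n U ≤ μ U := by
    have hle' := Measure.le_sum (fun n => c n • ν n) n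
    have := Measure.le_iff'.mp hle' U
    simpa [Measure.smul_apply, smul_eq_mul] using this
  exact lt_of_lt_of_le (ENNReal.mul_pos (hcne0 n) (hposν n U hUo hxU)) hle
end

section
/- If a compact Hausdorff space K contains a μ-point, then K contains a point which is simultaneously a μ-point and a weak P-point, or K contains a countable dense-in-itself subset all of whose points are μ-points. -/
open MeasureTheory Topology ENNReal NNReal

section Aux

variable {α : Type*} [TopologicalSpace α] [MeasurableSpace α] [OpensMeasurableSpace α] [T2Space α]

/-- geometric coefficients -/
noncomputable def cgeo (n : ℕ) : ℝ≥0∞ := 2⁻¹ ^ (n + 1)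

lemma cgeo_ne_zero (n : ℕ) : cgeo n ≠ 0 :=
  pow_ne_zero _ (ENNReal.inv_ne_zero.2 (by norm_num))

lemma cgeo_ne_top (n : ℕ) : cgeo n ≠ ∞ :=
  ENNReal.pow_ne_top (by simp)

lemma cgeo_tsum : ∑' n, cgeo n = 1 := by
  simp only [cgeo]
  rw [ENNReal.tsum_geometric_add_one, ENNReal.one_sub_inv_two, inv_inv]
  exact ENNReal.inv_mul_cancel (by norm_num) (by norm_num)

lemma cgeo_sum_le (F : Finset ℕ) : ∑ n ∈ F, cgeo n ≤ 1 :=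
  cgeo_tsum ▸ ENNReal.sum_le_tsum F

omit [T2Space α] in
set_option maxHeartbeats 1000000 in
/-- Outer regularity of a countable sum of finite outer regular measures. -/
theorem outerRegular_sum (ν : ℕ → Measure α) (hreg : ∀ n, (ν n).OuterRegular)
    (hfin : ∑' n, ν n Set.univ ≠ ∞) : (Measure.sum ν).OuterRegular := by
  constructor
  intro A hA r hr
  rw [Measure.sum_apply _ hA] at hr
  obtain ⟨ε, hε0, hεr⟩ := ENNReal.lt_iff_exists_add_pos_lt.1 hr
  have hε0' : (ε : ℝ≥0∞) ≠ 0 := by exact_mod_cast hε0.ne'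
  -- choose N with small tail
  have h2 : (0 : ℝ≥0∞) < ε / 2 := ENNReal.div_pos hε0' (by norm_num)
  have htail : Filter.Tendsto (fun N => ∑' k, ν (k + N) Set.univ) Filter.atTop (nhds 0) :=
    ENNReal.tendsto_sum_nat_add _ hfin
  obtain ⟨N, hN⟩ : ∃ N, ∑' k, ν (k + N) Set.univ < ε / 2 :=
    (htail.eventually (gt_mem_nhds h2)).exists
  -- choose open approximations for the first N measures
  have hU : ∀ n, ∃ U : Set α, A ⊆ U ∧ IsOpen U ∧ ν n U ≤ ν n A + (ε / 2) * cgeo n := by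
    intro n
    exact Set.exists_isOpen_le_add A (ν n)
      (mul_ne_zero (by simp [ENNReal.div_eq_top, hε0']) (cgeo_ne_zero n))
  choose U hUA hUopen hUle using hU
  set W : Set α := ⋂ n ∈ Finset.range N, U n with hWdef
  have hWopen : IsOpen W :=
    Set.Finite.isOpen_biInter (Finset.range N).finite_toSet (fun n _ => hUopen n)
  refine ⟨W, fun a ha => Set.mem_biInter fun n _ => hUA n ha, hWopen, ?_⟩
  have happ : Measure.sum ν W = ∑' n, ν n W := Measure.sum_apply _ hWopen.measurableSet
  have hsplit : ∑' n, ν n W = ∑ n ∈ Finset.range N, ν n W + ∑' k, ν (k + N) W :=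
    (Summable.sum_add_tsum_nat_add' (f := fun n => ν n W) (k := N) ENNReal.summable).symm
  have hWsub : ∀ n ∈ Finset.range N, W ⊆ U n := fun n hn => Set.biInter_subset_of_mem hn
  have hhead : ∑ n ∈ Finset.range N, ν n W ≤ (∑' n, ν n A) + ε / 2 := by
    calc ∑ n ∈ Finset.range N, ν n W
        ≤ ∑ n ∈ Finset.range N, (ν n A + (ε / 2) * cgeo n) :=
          Finset.sum_le_sum fun n hn => le_trans (measure_mono (hWsub n hn)) (hUle n)
      _ = (∑ n ∈ Finset.range N, ν n A) + (ε / 2) * ∑ n ∈ Finset.range N, cgeo n := by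
          rw [Finset.sum_add_distrib, Finset.mul_sum]
      _ ≤ (∑' n, ν n A) + (ε / 2) * 1 := by
          gcongr
          · exact ENNReal.sum_le_tsum _
          · exact cgeo_sum_le _
      _ = (∑' n, ν n A) + ε / 2 := by rw [mul_one]
  have htail' : ∑' k, ν (k + N) W ≤ ε / 2 :=
    le_trans (ENNReal.tsum_le_tsum fun k => measure_mono (Set.subset_univ _)) hN.le
  calc Measure.sum ν W = ∑ n ∈ Finset.range N, ν n W + ∑' k, ν (k + N) W := by
        rw [happ, hsplit]
    _ ≤ ((∑' n, ν n A) + ε / 2) + ε / 2 := add_le_add hhead htail'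
    _ = (∑' n, ν n A) + ε := by rw [add_assoc, ENNReal.add_halves]
    _ < r := hεr

set_option maxHeartbeats 1000000 in
/-- Inner regularity (w.r.t. compact sets) of a countable sum of finite inner regular
measures. -/
theorem innerRegular_sum (ν : ℕ → Measure α)
    (hreg : ∀ n, (ν n).InnerRegularWRT IsCompact MeasurableSet)
    (hfin : ∀ n, ν n Set.univ ≠ ∞) :
    (Measure.sum ν).InnerRegularWRT IsCompact MeasurableSet := by
  intro s hs r hr
  rw [Measure.sum_apply _ hs, ENNReal.tsum_eq_iSup_sum] at hr
  obtain ⟨F, hF⟩ := lt_iSup_iff.1 hr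
  obtain ⟨ε, hε0, hεF⟩ := ENNReal.lt_iff_exists_add_pos_lt.1 hF
  have hε0' : (ε : ℝ≥0∞) ≠ 0 := by exact_mod_cast hε0.ne'
  have hKn : ∀ n, ∃ Kn : Set α, Kn ⊆ s ∧ IsCompact Kn ∧ ν n s < ν n Kn + ε * cgeo n := by
    intro n
    exact (hreg n).exists_subset_lt_add isCompact_empty hs
      (ne_top_of_le_ne_top (hfin n) (measure_mono (Set.subset_univ s)))
      (mul_ne_zero hε0' (cgeo_ne_zero n))
  choose Kn hKs hKc hKlt using hKn
  refine ⟨⋃ n ∈ F, Kn n, Set.iUnion₂_subset fun n _ => hKs n, F.isCompact_biUnion fun n _ => hKc n,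
    ?_⟩
  have hKm : IsCompact (⋃ n ∈ F, Kn n) := F.isCompact_biUnion fun n _ => hKc n
  rw [Measure.sum_apply _ hKm.measurableSet]
  have key : ∑ n ∈ F, ν n s ≤ (∑ n ∈ F, ν n (⋃ n ∈ F, Kn n)) + ε := by
    calc ∑ n ∈ F, ν n s ≤ ∑ n ∈ F, (ν n (Kn n) + ε * cgeo n) :=
          Finset.sum_le_sum fun n _ => (hKlt n).le
      _ = (∑ n ∈ F, ν n (Kn n)) + ε * ∑ n ∈ F, cgeo n := by
          rw [Finset.sum_add_distrib, Finset.mul_sum]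
      _ ≤ (∑ n ∈ F, ν n (⋃ n ∈ F, Kn n)) + ε * 1 := by
          gcongr with n hn
          · exact Set.subset_biUnion_of_mem hn
          · exact cgeo_sum_le _
      _ ≤ (∑ n ∈ F, ν n (⋃ n ∈ F, Kn n)) + ε := by rw [mul_one]
  have h2 : r + ε < (∑ n ∈ F, ν n (⋃ n ∈ F, Kn n)) + ε := lt_of_lt_of_le hεF key
  have h3 : r < ∑ n ∈ F, ν n (⋃ n ∈ F, Kn n) :=
    (ENNReal.add_lt_add_iff_right ENNReal.coe_ne_top).1 h2
  exact h3.trans_le (ENNReal.sum_le_tsum F)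

/-- If `y` is a μ-point and `C` is a countable set of non-μ-points, then `y` is not in the
closure of `C`: otherwise the (suitably normalised) sum of nonatomic Radon measures witnessing
that the points of `C` are not μ-points would be a nonatomic Radon measure which is positive on
every neighbourhood of `y`. -/
theorem muPoint_not_mem_closure (y : α) (hy : IsMuPoint y) (C : Set α) (hC : C.Countable)
    (hCn : ∀ c ∈ C, ¬ IsMuPoint c) : y ∉ closure C := by
  rcases C.eq_empty_or_nonempty with rfl | hne
  · simp
  intro hycl
  obtain ⟨f, rfl⟩ := hC.exists_eq_range hne
  have hex : ∀ n, ∃ μ : Measure α, IsRadon μ ∧ (∀ z, μ {z} = 0) ∧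
      ∀ U : Set α, IsOpen U → f n ∈ U → μ U ≠ 0 := by
    intro n
    have h := hCn (f n) ⟨n, rfl⟩
    unfold IsMuPoint at h
    push_neg at h
    exact h
  choose μ hRadon hna hpos using hex
  set ν : Measure α := Measure.sum (fun n => cgeo n • μ n) with hν
  have hprob : ∀ n, (μ n) Set.univ = 1 := fun n => (hRadon n).1.measure_univ
  have happ : ∀ s : Set α, MeasurableSet s → ν s = ∑' n, cgeo n * μ n s := by
    intro s hs
    rw [hν, Measure.sum_apply _ hs]
    simp only [Measure.smul_apply, smul_eq_mul]
  have hRadonν : IsRadon ν := by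
    refine ⟨⟨?_⟩, ?_, ?_⟩
    · rw [happ _ MeasurableSet.univ]
      simp only [hprob, mul_one]
      exact cgeo_tsum
    · refine innerRegular_sum _ (fun n => ((hRadon n).2.1).smul _) (fun n => ?_)
      simp only [Measure.smul_apply, smul_eq_mul, hprob, mul_one]
      exact cgeo_ne_top n
    · refine outerRegular_sum _ (fun n => ?_) ?_
      · have := (hRadon n).2.2
        exact MeasureTheory.Measure.OuterRegular.smul (μ n) (cgeo_ne_top n)
      · simp only [Measure.smul_apply, smul_eq_mul, hprob, mul_one]
        rw [cgeo_tsum]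
        exact one_ne_top
  have hνna : ∀ z, ν {z} = 0 := by
    intro z
    rw [happ _ (measurableSet_singleton z)]
    simp [hna]
  obtain ⟨U, hUopen, hyU, hU0⟩ := hy ν hRadonν hνna
  obtain ⟨c, hcU, hcC⟩ := mem_closure_iff.1 hycl U hUopen hyU
  obtain ⟨n, rfl⟩ := hcC
  have hterm : cgeo n * μ n U = 0 := by
    rw [happ _ hUopen.measurableSet] at hU0
    exact ENNReal.tsum_eq_zero.1 hU0 n
  rcases mul_eq_zero.1 hterm with h | h
  · exact cgeo_ne_zero n h
  · exact hpos n U hUopen hcU h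

/-- A μ-point which is not a weak P-point lies in the closure of a countable set of
μ-points. -/
theorem muPoint_closure_of_not_weakP (y : α) (hy : IsMuPoint y) (hnw : ¬ IsWeakPPoint y) :
    ∃ D : Set α, D.Countable ∧ (∀ d ∈ D, IsMuPoint d) ∧ y ∉ D ∧ y ∈ closure D := by
  unfold IsWeakPPoint at hnw
  push_neg at hnw
  obtain ⟨C, hCc, hyC, hycl⟩ := hnw
  refine ⟨{c ∈ C | IsMuPoint c}, hCc.mono (Set.sep_subset _ _), fun d hd => hd.2,
    fun h => hyC h.1, ?_⟩
  have hnot : y ∉ closure {c ∈ C | ¬ IsMuPoint c} :=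
    muPoint_not_mem_closure y hy _ (hCc.mono (Set.sep_subset _ _)) (fun c hc => hc.2)
  have hsplit : C ⊆ {c ∈ C | IsMuPoint c} ∪ {c ∈ C | ¬ IsMuPoint c} := by
    intro c hc
    by_cases h : IsMuPoint c
    · exact Or.inl ⟨hc, h⟩
    · exact Or.inr ⟨hc, h⟩
  have := closure_mono hsplit hycl
  rw [closure_union] at this
  rcases this with h | h
  · exact h
  · exact absurd h hnot

end Aux

/-- Iterated saturation of a point under a set-valued map. -/
def iterSet {α : Type*} (D : α → Set α) (x : α) : ℕ → Set α
  | 0 => {x}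
  | n + 1 => iterSet D x n ∪ ⋃ a ∈ iterSet D x n, D a

/-- If a compact Hausdorff space `K` contains a μ-point, then it contains a
point which is simultaneously a μ-point and a weak P-point, or a nonempty countable
dense-in-itself subset consisting of μ-points. -/
theorem muPoint_dichotomy {K : Type*} [TopologicalSpace K] [CompactSpace K] [T2Space K]
    [MeasurableSpace K] [BorelSpace K] (x : K) (hx : IsMuPoint x) :
    (∃ y : K, IsMuPoint y ∧ IsWeakPPoint y) ∨
      ∃ A : Set K, A.Nonempty ∧ A.Countable ∧ (∀ a ∈ A, a ∈ closure (A \ {a})) ∧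
        ∀ a ∈ A, IsMuPoint a := by
  by_cases h : ∃ y : K, IsMuPoint y ∧ IsWeakPPoint y
  · exact Or.inl h
  right
  push_neg at h
  have hDex : ∀ y : K, IsMuPoint y → ∃ D : Set K, D.Countable ∧ (∀ d ∈ D, IsMuPoint d) ∧
      y ∉ D ∧ y ∈ closure D := fun y hy => muPoint_closure_of_not_weakP y hy (h y hy)
  choose! D hDc hDmu hDnot hDcl using hDex
  set A : ℕ → Set K := iterSet D x with hA
  have hA0 : A 0 = {x} := rfl
  have hAsucc : ∀ n, A (n + 1) = A n ∪ ⋃ a ∈ A n, D a := fun n => rfl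
  have hAmu : ∀ n, ∀ a ∈ A n, IsMuPoint a := by
    intro n
    induction n with
    | zero =>
      intro a ha
      rw [hA0, Set.mem_singleton_iff] at ha
      subst ha
      exact hx
    | succ n ih =>
      intro a ha
      rw [hAsucc] at ha
      rcases ha with ha | ha
      · exact ih a ha
      · obtain ⟨b, hb, hab⟩ := Set.mem_iUnion₂.1 ha
        exact hDmu b (ih b hb) a hab
  have hAc : ∀ n, (A n).Countable := by
    intro n
    induction n with
    | zero => rw [hA0]; exact Set.countable_singleton x
    | succ n ih =>
      rw [hAsucc]
      exact ih.union (ih.biUnion fun a ha => hDc a (hAmu n a ha))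
  refine ⟨⋃ n, A n, ⟨x, Set.mem_iUnion.2 ⟨0, rfl⟩⟩, Set.countable_iUnion hAc, ?_, ?_⟩
  · intro a ha
    obtain ⟨n, hn⟩ := Set.mem_iUnion.1 ha
    have hamu := hAmu n a hn
    have hsub : D a ⊆ (⋃ n, A n) \ {a} := by
      intro d hd
      refine ⟨Set.mem_iUnion.2 ⟨n + 1, ?_⟩, ?_⟩
      · rw [hAsucc]
        exact Or.inr (Set.mem_iUnion₂.2 ⟨a, hn, hd⟩)
      · intro hda
        rw [Set.mem_singleton_iff] at hda
        subst hda
        exact hDnot d hamu hd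
    exact closure_mono hsub (hDcl a hamu)
  · intro a ha
    obtain ⟨n, hn⟩ := Set.mem_iUnion.1 ha
    exact hAmu n a hn
end

section
/- There exists a 𝔠-OK point in ω*, where 𝔠 is the cardinality of the continuum. -/
open MeasureTheory Topology ENNReal NNReal

/-- The space `ω* = βω \ ω`: the free (non-principal) ultrafilters on `ℕ`, with the topology
inherited from the Stone space `βω` of all ultrafilters on `ℕ`. -/
def OmegaStar : Type := {u : Ultrafilter ℕ // ∀ n : ℕ, u ≠ pure n}

instance : TopologicalSpace OmegaStar := instTopologicalSpaceSubtype
instance : MeasurableSpace OmegaStar := borel OmegaStar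
instance : BorelSpace OmegaStar := ⟨rfl⟩

/-- A point `p` is a *κ-OK point* if for every sequence `(U n)` of open neighbourhoods of `p`
there is a family of κ many open neighbourhoods `(V i)` of `p` such that for every `n ≥ 1`,
the intersection of any `n` pairwise distinct members `V i` is contained in `U n`. -/
def IsOKPoint {X : Type*} [TopologicalSpace X] (κ : Cardinal) (p : X) : Prop :=
  ∀ U : ℕ → Set X, (∀ n, IsOpen (U n) ∧ p ∈ U n) →
    ∃ (ι : Type) (_ : Cardinal.mk ι = κ) (V : ι → Set X),
      (∀ i, IsOpen (V i) ∧ p ∈ V i) ∧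
      ∀ n : ℕ, 1 ≤ n → ∀ s : Finset ι, s.card = n → (⋂ i ∈ s, V i) ⊆ U n



namespace KunenOK

open Set

noncomputable section
open scoped Classical

/-- The underlying countable set for the independent linked family. -/
abbrev Pat : Type := Σ k : ℕ, Finset (Fin k) → Finset (Finset (Fin k))

instance : Countable Pat := by infer_instance

instance : Infinite Pat :=
  Infinite.of_injective (fun k => (⟨k, fun _ => ∅⟩ : Pat))
    (fun a b h => congrArg Sigma.fst h)

/-- A fixed bijection between `ℕ` and `Pat`. -/
def pe : ℕ ≃ Pat := Classical.choice (by infer_instance)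

/-- The trace of a set of naturals on `Fin k`. -/
def tr (x : Set ℕ) (k : ℕ) : Finset (Fin k) :=
  Finset.univ.filter (fun i => (i : ℕ) ∈ x)

lemma tr_sep {x y : Set ℕ} (h : x ≠ y) : ∃ K, ∀ k, K ≤ k → tr x k ≠ tr y k := by
  have hex : ∃ a, ¬(a ∈ x ↔ a ∈ y) := by
    by_contra hc
    push_neg at hc
    exact h (Set.ext hc)
  obtain ⟨a, ha⟩ := hex
  refine ⟨a + 1, fun k hk heq => ?_⟩
  have hak : a < k := hk
  have h1 : ((⟨a, hak⟩ : Fin k) ∈ tr x k) ↔ a ∈ x := by simp [tr]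
  have h2 : ((⟨a, hak⟩ : Fin k) ∈ tr y k) ↔ a ∈ y := by simp [tr]
  rw [heq] at h1
  exact ha (h1.symm.trans h2)

/-- A canonical separation bound for two sets. -/
def sepK (x y : Set ℕ) : ℕ := if h : x ≠ y then (tr_sep h).choose else 0

lemma sepK_spec {x y : Set ℕ} (h : x ≠ y) {k : ℕ} (hk : sepK x y ≤ k) :
    tr x k ≠ tr y k := by
  rw [sepK, dif_pos h] at hk
  exact (tr_sep h).choose_spec k hk

/-- The basic sets of the independent linked family: `A ρ x m` is the `m`-th level set in
row `ρ` and column `x`. -/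
def A (ρ x : Set ℕ) (m : ℕ) : Set ℕ :=
  {d | tr x (pe d).1 ∈ (pe d).2 (tr ρ (pe d).1) ∧ ((pe d).2 (tr ρ (pe d).1)).card ≤ m}

lemma A_mono (ρ x : Set ℕ) {m m' : ℕ} (h : m ≤ m') : A ρ x m ⊆ A ρ x m' :=
  fun d hd => ⟨hd.1, hd.2.trans h⟩

lemma finite_lowK (K : ℕ) : {d : ℕ | (pe d).1 < K}.Finite := by
  have h1 : {p : Pat | p.1 < K}.Finite := by
    have : {p : Pat | p.1 < K} ⊆ ⋃ k ∈ Finset.range K, (Sigma.mk k '' Set.univ) := by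
      rintro ⟨k, Φ⟩ hp
      simp only [Set.mem_iUnion]
      exact ⟨k, Finset.mem_range.mpr hp, Set.mem_image_of_mem _ (Set.mem_univ Φ)⟩
    exact Set.Finite.subset
      (Set.Finite.biUnion (Finset.range K).finite_toSet
        (fun k _ => Set.finite_univ.image _)) this
  have : {d : ℕ | (pe d).1 < K} = pe ⁻¹' {p : Pat | p.1 < K} := rfl
  rw [this]
  exact Set.Finite.preimage pe.injective.injOn h1

/-- Linkedness: `n` distinct columns in a common row at level `m < n` have finite
intersection. -/
lemma linked {ρ : Set ℕ} {s : Finset (Set ℕ)} {m : ℕ} (hm : m < s.card) :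
    (⋂ x ∈ s, A ρ x m).Finite := by
  set K : ℕ := s.sup (fun x => s.sup (fun y => sepK x y)) with hK
  apply (finite_lowK K).subset
  intro d hd
  simp only [Set.mem_iInter] at hd
  by_contra hdK
  simp only [Set.mem_setOf_eq, not_lt] at hdK
  set k := (pe d).1
  have hinj : Set.InjOn (fun x => tr x k) ↑s := by
    intro x hx y hy hxy
    by_contra hne
    have h1 : sepK x y ≤ s.sup (fun x => s.sup (fun y => sepK x y)) :=
      le_trans (Finset.le_sup (f := fun y => sepK x y) hy)
        (Finset.le_sup (f := fun x => s.sup (fun y => sepK x y)) hx)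
    exact sepK_spec hne (le_trans h1 hdK) hxy
  have hsub : s.image (fun x => tr x k) ⊆ (pe d).2 (tr ρ k) := by
    intro t ht
    obtain ⟨x, hx, rfl⟩ := Finset.mem_image.mp ht
    exact (hd x hx).1
  have hcard : s.card ≤ m := by
    calc s.card = (s.image (fun x => tr x k)).card :=
          (Finset.card_image_of_injOn hinj).symm
      _ ≤ ((pe d).2 (tr ρ k)).card := Finset.card_le_card hsub
      _ ≤ m := by
          obtain ⟨x, hx⟩ := Finset.card_pos.mp (lt_of_le_of_lt (Nat.zero_le m) hm)
          exact (hd x hx).2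
  exact absurd hcard (not_le.mpr hm)

/-- A selection: finitely many (row, column) pairs with levels. -/
def sel (T : Finset (Set ℕ × Set ℕ)) (ℓ : Set ℕ × Set ℕ → ℕ) : Set ℕ :=
  ⋂ q ∈ T, A q.1 q.2 (ℓ q)

/-- Pure legality (without liveness): each level is at least 1 and at least the number of
columns used in the same row. -/
def plegal (T : Finset (Set ℕ × Set ℕ)) (ℓ : Set ℕ × Set ℕ → ℕ) : Prop :=
  ∀ q ∈ T, 1 ≤ ℓ q ∧ (T.filter (fun r => r.1 = q.1)).card ≤ ℓ q

/-- Independence: every legal selection is infinite. -/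
lemma indep {T : Finset (Set ℕ × Set ℕ)} {ℓ : Set ℕ × Set ℕ → ℕ}
    (hleg : plegal T ℓ) : (sel T ℓ).Infinite := by
  set K : ℕ := T.sup (fun q => T.sup (fun q' => sepK q.1 q'.1 + sepK q.2 q'.2)) with hK
  have main : ∀ k, K ≤ k → ∃ d, (pe d).1 = k ∧ d ∈ sel T ℓ := by
    intro k hk
    set Φ : Finset (Fin k) → Finset (Finset (Fin k)) :=
      fun t => (T.filter (fun q => tr q.1 k = t)).image (fun q => tr q.2 k) with hΦ
    refine ⟨pe.symm ⟨k, Φ⟩, by rw [pe.apply_symm_apply], ?_⟩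
    rw [sel, Set.mem_iInter₂]
    intro q hq
    have hpe : pe (pe.symm ⟨k, Φ⟩) = ⟨k, Φ⟩ := pe.apply_symm_apply _
    rw [A, Set.mem_setOf_eq, hpe]
    have hfilter : T.filter (fun r => tr r.1 k = tr q.1 k) = T.filter (fun r => r.1 = q.1) := by
      apply Finset.filter_congr
      intro r hr
      constructor
      · intro htr
        by_contra hne
        have e1 : sepK r.1 q.1 + sepK r.2 q.2 ≤
            T.sup (fun q' => sepK r.1 q'.1 + sepK r.2 q'.2) :=
          Finset.le_sup (f := fun q' => sepK r.1 q'.1 + sepK r.2 q'.2) hq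
        have e2 : T.sup (fun q' => sepK r.1 q'.1 + sepK r.2 q'.2) ≤
            T.sup (fun q => T.sup (fun q' => sepK q.1 q'.1 + sepK q.2 q'.2)) :=
          Finset.le_sup (f := fun q => T.sup (fun q' => sepK q.1 q'.1 + sepK q.2 q'.2)) hr
        have hKle : sepK r.1 q.1 ≤ k :=
          le_trans (le_trans (Nat.le_add_right _ _) (le_trans e1 e2)) hk
        exact sepK_spec hne hKle htr
      · intro h; rw [h]
    constructor
    · apply Finset.mem_image.mpr
      exact ⟨q, Finset.mem_filter.mpr ⟨hq, rfl⟩, rfl⟩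
    · calc (Φ (tr q.1 k)).card ≤ (T.filter (fun r => tr r.1 k = tr q.1 k)).card :=
            Finset.card_image_le
        _ = (T.filter (fun r => r.1 = q.1)).card := by rw [hfilter]
        _ ≤ ℓ q := (hleg q hq).2
  choose g hg1 hg2 using fun n : ℕ => main (K + n) (Nat.le_add_right _ _)
  have hinj : Function.Injective g := fun a b hab =>
    Nat.add_left_cancel (by rw [← hg1 a, ← hg1 b, hab])
  exact Set.infinite_of_injective_forall_mem hinj hg2


/-! ### Sequences, filters and the invariant -/

/-- A sequence of subsets of `ℕ`; these index the stages of the construction. -/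
abbrev Seq : Type := ℕ → Set ℕ

/-- The decreasing sequence associated to `σ`. -/
def Dseq (σ : Seq) (n : ℕ) : Set ℕ := {a | ∀ k, k ≤ n → a ∈ σ k}

lemma Dseq_anti (σ : Seq) {n m : ℕ} (h : n ≤ m) : Dseq σ m ⊆ Dseq σ n :=
  fun _ ha k hk => ha k (hk.trans h)

lemma Dseq_subset (σ : Seq) (n : ℕ) : Dseq σ n ⊆ σ n := fun _ ha => ha n le_rfl

/-- The key neighbourhood sets produced at a (positively decided) stage. -/
def Bset (ρ x : Set ℕ) (σ : Seq) : Set ℕ :=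
  {a | ∃ m, 1 ≤ m ∧ a ∈ A ρ x m ∧ a ∈ Dseq σ m}

lemma Bsub (ρ x : Set ℕ) (σ : Seq) {M : ℕ} (hM : 1 ≤ M) :
    A ρ x M ∩ Dseq σ M ⊆ Bset ρ x σ :=
  fun a ha => ⟨M, hM, ha.1, ha.2⟩

/-- The base generators: the cofinite sets. -/
def G0 : Set (Set ℕ) := {s | sᶜ.Finite}

/-- Legality of a selection relative to a set of live rows. -/
def legal (Live : Set (Set ℕ)) (T : Finset (Set ℕ × Set ℕ)) (ℓ : Set ℕ × Set ℕ → ℕ) : Prop :=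
  ∀ q ∈ T, q.1 ∈ Live ∧ 1 ≤ ℓ q ∧ (T.filter (fun r => r.1 = q.1)).card ≤ ℓ q

lemma legal_mono {Live Live' : Set (Set ℕ)} (h : Live ⊆ Live') {T ℓ}
    (hl : legal Live T ℓ) : legal Live' T ℓ :=
  fun q hq => ⟨h (hl q hq).1, (hl q hq).2⟩

/-- The main invariant: every finite intersection of generators together with any legal
selection is infinite. -/
def Jinv (G Live : Set (Set ℕ)) : Prop :=
  ∀ t : Finset (Set ℕ), ↑t ⊆ G → ∀ T ℓ, legal Live T ℓ → (⋂₀ ↑t ∩ sel T ℓ).Infinite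

lemma Jinv_mono {G G' Live Live' : Set (Set ℕ)} (hG : G' ⊆ G) (hL : Live' ⊆ Live)
    (h : Jinv G Live) : Jinv G' Live' :=
  fun t ht T ℓ hleg => h t (fun s hs => hG (ht hs)) T ℓ (legal_mono hL hleg)

lemma sInter_finset_cofinite {t : Finset (Set ℕ)} (ht : ↑t ⊆ G0) :
    ((⋂₀ (↑t : Set (Set ℕ)))ᶜ : Set ℕ).Finite := by
  rw [Set.compl_sInter]
  apply Set.Finite.sUnion
  · exact (t.finite_toSet.image _)
  · rintro s ⟨u, hu, rfl⟩
    exact ht hu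

lemma Jinv_base : Jinv G0 Set.univ := by
  intro t ht T ℓ hleg
  have h1 : (sel T ℓ).Infinite := indep (fun q hq => (hleg q hq).2)
  have h2 := sInter_finset_cofinite ht
  apply Set.Infinite.mono (s := sel T ℓ \ (⋂₀ ↑t)ᶜ)
  · intro a ha
    exact ⟨not_not.mp (fun hc => ha.2 hc), ha.1⟩
  · exact h1.diff h2

/-- Merging two selections with disjoint row sets. -/
lemma merge {Live : Set (Set ℕ)} {T1 T2 : Finset (Set ℕ × Set ℕ)} {ℓ1 ℓ2}
    (hdisj : ∀ q ∈ T1, ∀ q' ∈ T2, q.1 ≠ q'.1)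
    (h1 : legal Live T1 ℓ1) (h2 : legal Live T2 ℓ2) :
    legal Live (T1 ∪ T2) (fun q => if q ∈ T1 then ℓ1 q else ℓ2 q) ∧
      sel (T1 ∪ T2) (fun q => if q ∈ T1 then ℓ1 q else ℓ2 q) = sel T1 ℓ1 ∩ sel T2 ℓ2 := by
  have hfilt1 : ∀ q ∈ T1, (T1 ∪ T2).filter (fun r => r.1 = q.1) =
      T1.filter (fun r => r.1 = q.1) := by
    intro q hq
    ext r
    simp only [Finset.mem_filter, Finset.mem_union]
    constructor
    · rintro ⟨hr | hr, hre⟩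
      · exact ⟨hr, hre⟩
      · exact absurd hre.symm (hdisj q hq r hr)
    · rintro ⟨hr, hre⟩; exact ⟨Or.inl hr, hre⟩
  have hfilt2 : ∀ q ∈ T2, (T1 ∪ T2).filter (fun r => r.1 = q.1) =
      T2.filter (fun r => r.1 = q.1) := by
    intro q hq
    ext r
    simp only [Finset.mem_filter, Finset.mem_union]
    constructor
    · rintro ⟨hr | hr, hre⟩
      · exact absurd hre (hdisj r hr q hq)
      · exact ⟨hr, hre⟩
    · rintro ⟨hr, hre⟩; exact ⟨Or.inr hr, hre⟩
  have hT12 : ∀ q, q ∈ T1 → q ∈ T2 → False := fun q hq1 hq2 => hdisj q hq1 q hq2 rfl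
  constructor
  · intro q hq
    rcases Finset.mem_union.mp hq with hq1 | hq2
    · dsimp only
      rw [if_pos hq1, hfilt1 q hq1]
      exact h1 q hq1
    · have hnq1 : q ∉ T1 := fun hc => hT12 q hc hq2
      dsimp only
      rw [if_neg hnq1, hfilt2 q hq2]
      exact h2 q hq2
  · ext a
    simp only [sel, Set.mem_iInter, Set.mem_inter_iff, Finset.mem_union]
    constructor
    · intro h
      constructor
      · intro q hq
        have := h q (Or.inl hq)
        rwa [if_pos hq] at this
      · intro q hq
        have := h q (Or.inr hq)
        rwa [if_neg (fun hc => hT12 q hc hq)] at this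
    · rintro ⟨ha1, ha2⟩ q hq
      rcases hq with hq | hq
      · rw [if_pos hq]; exact ha1 q hq
      · rw [if_neg (fun hc => hT12 q hc hq)]; exact ha2 q hq

/-- Negative step: deciding the complement of a set witnessed to be incompatible. -/
lemma Jinv_neg_step {G Live : Set (Set ℕ)} (hJ : Jinv G Live)
    {t0 : Finset (Set ℕ)} (ht0 : ↑t0 ⊆ G) {T0 ℓ0} (hleg0 : legal Live T0 ℓ0)
    {Dn : Set ℕ} (hfin : (⋂₀ ↑t0 ∩ sel T0 ℓ0 ∩ Dn).Finite) :
    Jinv (insert Dnᶜ G) (Live \ ↑(T0.image Prod.fst)) := by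
  intro t ht T ℓ hleg
  intro hbad
  have ht' : ↑(t.erase Dnᶜ) ⊆ G := by
    intro s hs
    rcases ht (Finset.mem_coe.mpr (Finset.mem_of_mem_erase hs)) with h | h
    · exact absurd h (Finset.ne_of_mem_erase hs)
    · exact h
  have hdisj : ∀ q ∈ T0, ∀ q' ∈ T, q.1 ≠ q'.1 := by
    intro q hq q' hq' he
    have := (hleg q' hq').1
    exact this.2 (by
      rw [← he]
      exact Finset.mem_coe.mpr (Finset.mem_image_of_mem Prod.fst hq))
  have hlegT : legal Live T ℓ := legal_mono Set.diff_subset hleg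
  obtain ⟨hlegU, hselU⟩ := merge hdisj hleg0 hlegT
  have hinf := hJ (t0 ∪ t.erase Dnᶜ) (by
      intro s hs
      rcases Finset.mem_coe.mp hs |> Finset.mem_union.mp with h | h
      · exact ht0 h
      · exact ht' h) _ _ hlegU
  rw [hselU] at hinf
  apply hinf
  have hsub : ⋂₀ ↑(t0 ∪ t.erase Dnᶜ) ∩ (sel T0 ℓ0 ∩ sel T ℓ) ⊆
      (⋂₀ ↑t0 ∩ sel T0 ℓ0 ∩ Dn) ∪ (⋂₀ ↑t ∩ sel T ℓ) := by
    intro a ⟨hat, hasel⟩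
    have hat0 : a ∈ ⋂₀ (↑t0 : Set (Set ℕ)) := by
      intro s hs
      exact hat s (by
        rw [Finset.coe_union]
        exact Or.inl hs)
    by_cases haD : a ∈ Dn
    · exact Or.inl ⟨⟨hat0, hasel.1⟩, haD⟩
    · refine Or.inr ⟨?_, hasel.2⟩
      intro s hs
      by_cases hsD : s = Dnᶜ
      · rw [hsD]; exact haD
      · exact hat s (by
          rw [Finset.coe_union]
          exact Or.inr (Finset.mem_coe.mpr (Finset.mem_erase.mpr ⟨hsD, Finset.mem_coe.mp hs⟩)))
  exact Set.Finite.subset (Set.Finite.union hfin hbad) hsub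


/-- Positive step: if every `Dseq σ n` is compatible with everything, we may add all the
`Dseq σ n` and all the sets `Bset ρ₀ x σ` for a live row `ρ₀`. -/
lemma Jinv_pos_step {G Live : Set (Set ℕ)} (σ : Seq) {ρ₀ : Set ℕ} (hρ₀ : ρ₀ ∈ Live)
    (hP : ∀ n, 1 ≤ n → ∀ t : Finset (Set ℕ), ↑t ⊆ G → ∀ T ℓ, legal Live T ℓ →
      (⋂₀ ↑t ∩ sel T ℓ ∩ Dseq σ n).Infinite) :
    Jinv (G ∪ ({s | ∃ n, 1 ≤ n ∧ s = Dseq σ n} ∪ {s | ∃ x, s = Bset ρ₀ x σ}))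
      (Live \ {ρ₀}) := by
  intro t ht T ℓ hleg
  set tG := t.filter (fun s => s ∈ G) with htG
  let nOf : Set ℕ → ℕ := fun s => if h : ∃ n, 1 ≤ n ∧ s = Dseq σ n then h.choose else 1
  let xOf : Set ℕ → Set ℕ := fun s => if h : ∃ x, s = Bset ρ₀ x σ then h.choose else ∅
  set tB := (t.filter (fun s => s ∉ G)).filter
    (fun s => ¬ ∃ n, 1 ≤ n ∧ s = Dseq σ n) with htB
  set xs := tB.image xOf with hxs
  set M := max (max (t.sup nOf) xs.card) 1 with hMdef
  have h1M : 1 ≤ M := le_max_right _ _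
  set T' := xs.image (fun x => ((ρ₀, x) : Set ℕ × Set ℕ)) with hT'
  have hlegT' : legal Live T' (fun _ => M) := by
    intro q hq
    obtain ⟨x, _, rfl⟩ := Finset.mem_image.mp hq
    refine ⟨hρ₀, h1M, ?_⟩
    calc (T'.filter (fun r => r.1 = (ρ₀, x).1)).card ≤ T'.card := Finset.card_filter_le _ _
      _ ≤ xs.card := Finset.card_image_le
      _ ≤ M := le_trans (le_max_right _ _) (le_max_left _ _)
  have hdisj : ∀ q ∈ T, ∀ q' ∈ T', q.1 ≠ q'.1 := by
    intro q hq q' hq' he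
    obtain ⟨x, _, rfl⟩ := Finset.mem_image.mp hq'
    exact (hleg q hq).1.2 (by rw [he]; exact Set.mem_singleton _)
  have hlegT : legal Live T ℓ := legal_mono Set.diff_subset hleg
  obtain ⟨hlegU, hselU⟩ := merge hdisj hlegT hlegT'
  have hinf := hP M h1M tG (by
    intro s hs
    exact (Finset.mem_filter.mp (Finset.mem_coe.mp hs)).2) _ _ hlegU
  rw [hselU] at hinf
  apply hinf.mono
  intro a ha
  obtain ⟨⟨hatG, hselTa, hselT'a⟩, haD⟩ := ha
  refine ⟨?_, hselTa⟩
  intro s hs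
  have hs' := Finset.mem_coe.mp hs
  by_cases hsG : s ∈ G
  · exact hatG s (Finset.mem_coe.mpr (Finset.mem_filter.mpr ⟨hs', hsG⟩))
  · by_cases hD : ∃ n, 1 ≤ n ∧ s = Dseq σ n
    · have hnOf : nOf s = hD.choose := dif_pos hD
      have hseq : s = Dseq σ (nOf s) := by rw [hnOf]; exact hD.choose_spec.2
      have hle : nOf s ≤ M :=
        le_trans (Finset.le_sup hs') (le_trans (le_max_left _ _) (le_max_left _ _))
      rw [hseq]
      exact Dseq_anti σ hle haD
    · have hB : ∃ x, s = Bset ρ₀ x σ := by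
        rcases ht hs with h | h
        · exact absurd h hsG
        · rcases h with h | h
          · exact absurd h hD
          · exact h
      have hxOf : xOf s = hB.choose := dif_pos hB
      have hseq : s = Bset ρ₀ (xOf s) σ := by rw [hxOf]; exact hB.choose_spec
      have hxmem : xOf s ∈ xs := by
        rw [hxs]
        refine Finset.mem_image_of_mem xOf ?_
        rw [htB]
        exact Finset.mem_filter.mpr ⟨Finset.mem_filter.mpr ⟨hs', hsG⟩, hD⟩
      have hA : a ∈ A ρ₀ (xOf s) M := by
        rw [sel] at hselT'a
        rw [Set.mem_iInter₂] at hselT'a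
        exact hselT'a ((ρ₀, xOf s)) (by
          rw [hT']
          exact Finset.mem_image_of_mem _ hxmem)
      rw [hseq]
      exact Bsub ρ₀ (xOf s) σ h1M ⟨hA, haD⟩

/-! ### The transfinite construction -/

/-- A well-order on the set of sequences realising its cardinal. -/
def R : Seq → Seq → Prop := (Cardinal.ord_eq Seq).choose

instance instWO : IsWellOrder Seq R := (Cardinal.ord_eq Seq).choose_spec.choose

lemma ord_type_R : Cardinal.ord (Cardinal.mk Seq) = Ordinal.type R :=
  (Cardinal.ord_eq Seq).choose_spec.choose_spec

lemma mk_Seq : Cardinal.mk Seq = Cardinal.continuum := by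
  have e1 : Seq ≃ Set (ℕ × ℕ) := (Equiv.curry ℕ ℕ Prop).symm
  rw [Cardinal.mk_congr e1, Cardinal.mk_set, Cardinal.mk_denumerable,
    Cardinal.two_power_aleph0]

lemma mk_setNat : Cardinal.mk (Set ℕ) = Cardinal.continuum := by
  rw [Cardinal.mk_set, Cardinal.mk_nat, Cardinal.two_power_aleph0]

/-- Witnesses for the negative case at a stage. -/
abbrev Wit : Type := ℕ × Finset (Set ℕ) × Finset (Set ℕ × Set ℕ) × ((Set ℕ × Set ℕ) → ℕ)

def NegW (G Live : Set (Set ℕ)) (σ : Seq) (w : Wit) : Prop :=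
  1 ≤ w.1 ∧ ↑w.2.1 ⊆ G ∧ legal Live w.2.2.1 w.2.2.2 ∧
    (⋂₀ ↑w.2.1 ∩ sel w.2.2.1 w.2.2.2 ∩ Dseq σ w.1).Finite

/-- One step of the construction: the new generators and the newly killed rows. -/
def core (σ : Seq) (G Live : Set (Set ℕ)) : Set (Set ℕ) × Set (Set ℕ) :=
  if hP : ∃ w : Wit, NegW G Live σ w then
    ({(Dseq σ hP.choose.1)ᶜ}, ↑(hP.choose.2.2.1.image Prod.fst))
  else if hL : Live.Nonempty then
    ({s | ∃ n, 1 ≤ n ∧ s = Dseq σ n} ∪ {s | ∃ x, s = Bset hL.choose x σ}, {hL.choose})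
  else (∅, ∅)

lemma core_killed_finite (σ : Seq) (G Live : Set (Set ℕ)) : (core σ G Live).2.Finite := by
  rw [core]
  split_ifs with h1 h2
  · exact Finset.finite_toSet _
  · exact Set.finite_singleton _
  · exact Set.finite_empty

lemma core_spec (σ : Seq) (G Live : Set (Set ℕ)) (hL : Live.Nonempty) :
    (∃ w : Wit, NegW G Live σ w ∧
       core σ G Live = ({(Dseq σ w.1)ᶜ}, ↑(w.2.2.1.image Prod.fst))) ∨
    (∃ ρ₀, ρ₀ ∈ Live ∧ (¬ ∃ w : Wit, NegW G Live σ w) ∧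
       core σ G Live =
         ({s | ∃ n, 1 ≤ n ∧ s = Dseq σ n} ∪ {s | ∃ x, s = Bset ρ₀ x σ}, {ρ₀})) := by
  rw [core]
  split_ifs with hP
  · exact Or.inl ⟨hP.choose, hP.choose_spec, rfl⟩
  · exact Or.inr ⟨hL.choose, hL.choose_spec, hP, rfl⟩

/-- The full transfinite recursion. -/
def stage : Seq → Set (Set ℕ) × Set (Set ℕ) :=
  instWO.toIsWellFounded.wf.fix
    (fun σ rec => core σ (G0 ∪ {s | ∃ τ, ∃ h : R τ σ, s ∈ (rec τ h).1})
      {ρ | ∀ τ, ∀ h : R τ σ, ρ ∉ (rec τ h).2})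

/-- Generators available strictly before stage `σ`. -/
def Glt (σ : Seq) : Set (Set ℕ) := G0 ∪ {s | ∃ τ, ∃ _h : R τ σ, s ∈ (stage τ).1}

/-- Rows still alive strictly before stage `σ`. -/
def Livelt (σ : Seq) : Set (Set ℕ) := {ρ | ∀ τ, ∀ _h : R τ σ, ρ ∉ (stage τ).2}

lemma stage_def (σ : Seq) : stage σ = core σ (Glt σ) (Livelt σ) := by
  unfold stage
  rw [WellFounded.fix_eq]
  rfl

lemma killed_finite (σ : Seq) : (stage σ).2.Finite := by
  rw [stage_def]
  exact core_killed_finite σ _ _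

/-- Generators available after stage `σ`. -/
def Gle (σ : Seq) : Set (Set ℕ) := Glt σ ∪ (stage σ).1

/-- Rows still alive after stage `σ`. -/
def Livele (σ : Seq) : Set (Set ℕ) := Livelt σ \ (stage σ).2

lemma Gle_subset_Glt {τ σ : Seq} (h : R τ σ) : Gle τ ⊆ Glt σ := by
  rintro s (hs | hs)
  · rcases hs with hs | ⟨τ', h', hs⟩
    · exact Or.inl hs
    · exact Or.inr ⟨τ', IsTrans.trans _ _ _ h' h, hs⟩
  · exact Or.inr ⟨τ, h, hs⟩

lemma Livelt_subset_Livele {τ σ : Seq} (h : R τ σ) : Livelt σ ⊆ Livele τ := by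
  intro ρ hρ
  exact ⟨fun τ' h' => hρ τ' (IsTrans.trans _ _ _ h' h), hρ τ h⟩

lemma Livelt_nonempty (σ : Seq) : (Livelt σ).Nonempty := by
  have hcard : Cardinal.mk {ρ : Set ℕ | ∃ τ, ∃ _h : R τ σ, ρ ∈ (stage τ).2} <
      Cardinal.continuum := by
    have hU : {ρ : Set ℕ | ∃ τ, ∃ _h : R τ σ, ρ ∈ (stage τ).2} =
        ⋃ τ : {τ : Seq // R τ σ}, (stage ↑τ).2 := by
      ext ρ
      simp only [Set.mem_setOf_eq, Set.mem_iUnion]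
      exact ⟨fun ⟨τ, h, hm⟩ => ⟨⟨τ, h⟩, hm⟩, fun ⟨⟨τ, h⟩, hm⟩ => ⟨τ, h, hm⟩⟩
    rw [hU]
    refine lt_of_le_of_lt (Cardinal.mk_iUnion_le _) ?_
    have h1 : Cardinal.mk {τ : Seq // R τ σ} < Cardinal.continuum := by
      have h2 := Cardinal.card_typein_lt (r := R) σ ord_type_R
      rw [mk_Seq] at h2
      · exact h2
    have h3 : (⨆ τ : {τ : Seq // R τ σ}, Cardinal.mk ((stage ↑τ).2 : Set (Set ℕ))) ≤
        Cardinal.aleph0 := by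
      apply ciSup_le'
      intro τ
      exact Cardinal.mk_le_aleph0_iff.mpr (Set.countable_coe_iff.mpr
        (killed_finite ↑τ).countable)
    exact Cardinal.mul_lt_of_lt Cardinal.aleph0_le_continuum h1
      (lt_of_le_of_lt h3 Cardinal.aleph0_lt_continuum)
  by_contra hne
  rw [Set.not_nonempty_iff_eq_empty] at hne
  have huniv : {ρ : Set ℕ | ∃ τ, ∃ _h : R τ σ, ρ ∈ (stage τ).2} = Set.univ := by
    ext ρ
    simp only [Set.mem_setOf_eq, Set.mem_univ, iff_true]
    by_contra hc
    push_neg at hc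
    have : ρ ∈ Livelt σ := fun τ h => hc τ h
    rw [hne] at this
    exact this
  rw [huniv, Cardinal.mk_univ, mk_setNat] at hcard
  exact lt_irrefl _ hcard

lemma exists_max (ts : Finset Seq) (h : ts.Nonempty) :
    ∃ m ∈ ts, ∀ τ ∈ ts, τ = m ∨ R τ m := by
  induction ts using Finset.induction_on with
  | empty => exact absurd h (by simp)
  | @insert a s ha IH =>
    rcases Finset.eq_empty_or_nonempty s with rfl | hs
    · refine ⟨a, Finset.mem_insert_self _ _, ?_⟩
      intro τ hτ
      rcases Finset.mem_insert.mp hτ with h | h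
      · exact Or.inl h
      · exact absurd h (Finset.notMem_empty τ)
    · obtain ⟨m, hm, hmax⟩ := IH hs
      rcases trichotomous_of R a m with hr | he | hr
      · refine ⟨m, Finset.mem_insert_of_mem hm, ?_⟩
        intro τ hτ
        rcases Finset.mem_insert.mp hτ with h | h
        · exact Or.inr (h ▸ hr)
        · exact hmax τ h
      · refine ⟨m, Finset.mem_insert_of_mem hm, ?_⟩
        intro τ hτ
        rcases Finset.mem_insert.mp hτ with h | h
        · exact Or.inl (h.trans he)
        · exact hmax τ h
      · refine ⟨a, Finset.mem_insert_self _ _, ?_⟩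
        intro τ hτ
        rcases Finset.mem_insert.mp hτ with h | h
        · exact Or.inl h
        · rcases hmax τ h with h' | h'
          · exact Or.inr (h' ▸ hr)
          · exact Or.inr (IsTrans.trans _ _ _ h' hr)

/-- The main invariant holds after every stage. -/
lemma Jle (σ : Seq) : Jinv (Gle σ) (Livele σ) := by
  refine instWO.toIsWellFounded.wf.induction
    (C := fun σ => Jinv (Gle σ) (Livele σ)) σ ?_
  clear σ
  intro σ IH
  have Jlt : Jinv (Glt σ) (Livelt σ) := by
    intro t ht T ℓ hleg
    set tS := t.filter (fun s => s ∉ G0) with htS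
    rcases Finset.eq_empty_or_nonempty tS with hts | htsne
    · have hsub : ↑t ⊆ G0 := by
        intro s hs
        by_contra hsG
        have : s ∈ tS := Finset.mem_filter.mpr ⟨Finset.mem_coe.mp hs, hsG⟩
        rw [hts] at this
        exact Finset.notMem_empty s this
      exact Jinv_base t hsub T ℓ (legal_mono (Set.subset_univ _) hleg)
    · let τOf : Set ℕ → Seq :=
        fun s => if h : ∃ τ, ∃ _h : R τ σ, s ∈ (stage τ).1 then h.choose else σ
      have hτOf : ∀ s ∈ tS, R (τOf s) σ ∧ s ∈ (stage (τOf s)).1 := by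
        intro s hs
        have hsm := Finset.mem_filter.mp hs
        have hex : ∃ τ, ∃ _h : R τ σ, s ∈ (stage τ).1 := by
          rcases ht (Finset.mem_coe.mpr hsm.1) with h | h
          · exact absurd h hsm.2
          · exact h
        have heq : τOf s = hex.choose := dif_pos hex
        rw [heq]
        exact ⟨hex.choose_spec.choose, hex.choose_spec.choose_spec⟩
      obtain ⟨m, hmts, hmax⟩ := exists_max (tS.image τOf) (htsne.image _)
      obtain ⟨s₀, hs₀, hms₀⟩ := Finset.mem_image.mp hmts
      have hmσ : R m σ := by rw [← hms₀]; exact (hτOf s₀ hs₀).1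
      have hsub : ↑t ⊆ Gle m := by
        intro s hs
        by_cases hsG : s ∈ G0
        · exact Or.inl (Or.inl hsG)
        · have hstS : s ∈ tS := Finset.mem_filter.mpr ⟨Finset.mem_coe.mp hs, hsG⟩
          have h1 := hτOf s hstS
          rcases hmax (τOf s) (Finset.mem_image_of_mem _ hstS) with he | hr
          · exact Or.inr (he ▸ h1.2)
          · exact Or.inl (Or.inr ⟨τOf s, hr, h1.2⟩)
      exact IH m hmσ t hsub T ℓ (legal_mono (Livelt_subset_Livele hmσ) hleg)
  have hLne := Livelt_nonempty σ
  rcases core_spec σ (Glt σ) (Livelt σ) hLne with ⟨w, hw, hc⟩ | ⟨ρ₀, hρ₀, hP, hc⟩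
  · have hstep := Jinv_neg_step Jlt hw.2.1 hw.2.2.1 hw.2.2.2
    rw [Gle, Livele, stage_def, hc]
    rw [Set.union_singleton]
    exact hstep
  · have hP' : ∀ n, 1 ≤ n → ∀ t : Finset (Set ℕ), ↑t ⊆ Glt σ → ∀ T ℓ,
        legal (Livelt σ) T ℓ → (⋂₀ ↑t ∩ sel T ℓ ∩ Dseq σ n).Infinite := by
      intro n hn t ht T ℓ hleg hcon
      exact hP ⟨⟨n, t, T, ℓ⟩, hn, ht, hleg, hcon⟩
    have hstep := Jinv_pos_step σ hρ₀ hP'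
    rw [Gle, Livele, stage_def, hc]
    exact hstep

/-! ### The resulting ultrafilter -/

/-- All generators produced by the construction. -/
def Gall : Set (Set ℕ) := G0 ∪ {s | ∃ τ, s ∈ (stage τ).1}

lemma Gall_fip (t : Finset (Set ℕ)) (ht : ↑t ⊆ Gall) :
    (⋂₀ (↑t : Set (Set ℕ))).Infinite := by
  have hsel : sel (∅ : Finset (Set ℕ × Set ℕ)) (fun _ => 1) = Set.univ := by
    simp [sel]
  have hlegemp : ∀ Live, legal Live (∅ : Finset (Set ℕ × Set ℕ)) (fun _ => 1) :=
    fun _ q hq => absurd hq (Finset.notMem_empty q)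
  set tS := t.filter (fun s => s ∉ G0) with htS
  rcases Finset.eq_empty_or_nonempty tS with hts | htsne
  · have hsub : ↑t ⊆ G0 := by
      intro s hs
      by_contra hsG
      have : s ∈ tS := Finset.mem_filter.mpr ⟨Finset.mem_coe.mp hs, hsG⟩
      rw [hts] at this
      exact Finset.notMem_empty s this
    have := Jinv_base t hsub ∅ (fun _ => 1) (hlegemp _)
    rw [hsel, Set.inter_univ] at this
    exact this
  · let τOf : Set ℕ → Seq :=
      fun s => if h : ∃ τ, s ∈ (stage τ).1 then h.choose else (fun _ => ∅)
    have hτOf : ∀ s ∈ tS, s ∈ (stage (τOf s)).1 := by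
      intro s hs
      have hsm := Finset.mem_filter.mp hs
      have hex : ∃ τ, s ∈ (stage τ).1 := by
        rcases ht (Finset.mem_coe.mpr hsm.1) with h | h
        · exact absurd h hsm.2
        · exact h
      have heq : τOf s = hex.choose := dif_pos hex
      rw [heq]
      exact hex.choose_spec
    obtain ⟨m, hmts, hmax⟩ := exists_max (tS.image τOf) (htsne.image _)
    have hsub : ↑t ⊆ Gle m := by
      intro s hs
      by_cases hsG : s ∈ G0
      · exact Or.inl (Or.inl hsG)
      · have hstS : s ∈ tS := Finset.mem_filter.mpr ⟨Finset.mem_coe.mp hs, hsG⟩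
        rcases hmax (τOf s) (Finset.mem_image_of_mem _ hstS) with he | hr
        · exact Or.inr (he ▸ hτOf s hstS)
        · exact Or.inl (Or.inr ⟨τOf s, hr, hτOf s hstS⟩)
    have := Jle m t hsub ∅ (fun _ => 1) (hlegemp _)
    rw [hsel, Set.inter_univ] at this
    exact this

lemma exists_good_ultrafilter : ∃ p : Ultrafilter ℕ, ∀ s ∈ Gall, s ∈ p := by
  have hne : (Filter.generate Gall).NeBot := by
    rw [Filter.generate_neBot_iff]
    intro tset hsub hfin
    have h1 : (↑hfin.toFinset : Set (Set ℕ)) ⊆ Gall := by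
      rwa [Set.Finite.coe_toFinset]
    have h2 := Gall_fip hfin.toFinset h1
    rw [Set.Finite.coe_toFinset] at h2
    exact h2.nonempty
  obtain ⟨u, hu⟩ := Filter.exists_ultrafilter_le (Filter.generate Gall)
  exact ⟨u, fun s hs => hu (Filter.mem_generate_of_mem hs)⟩

/-! ### The OK-family property of the `Bset`s -/

lemma Binter_subset (ρ₀ : Set ℕ) (σ : Seq) (s : Finset (Set ℕ)) (hs : s.Nonempty) (n : ℕ) :
    (⋂ x ∈ s, Bset ρ₀ x σ) ⊆
      Dseq σ n ∪ ⋃ M ∈ Finset.Ico 1 n, ⋂ x ∈ s, A ρ₀ x M := by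
  intro a ha
  rw [Set.mem_iInter₂] at ha
  let g : Set ℕ → ℕ :=
    fun x => if h : ∃ m, 1 ≤ m ∧ a ∈ A ρ₀ x m ∧ a ∈ Dseq σ m then h.choose else 1
  have hg : ∀ x ∈ s, 1 ≤ g x ∧ a ∈ A ρ₀ x (g x) ∧ a ∈ Dseq σ (g x) := by
    intro x hx
    have hex : ∃ m, 1 ≤ m ∧ a ∈ A ρ₀ x m ∧ a ∈ Dseq σ m := ha x hx
    have heq : g x = hex.choose := dif_pos hex
    rw [heq]
    exact hex.choose_spec
  obtain ⟨x₀, hx₀, hsup⟩ := Finset.exists_mem_eq_sup s hs g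
  by_cases hMn : n ≤ s.sup g
  · left
    have h1 : a ∈ Dseq σ (s.sup g) := by
      rw [hsup]
      exact (hg x₀ hx₀).2.2
    exact Dseq_anti σ hMn h1
  · right
    have h1M : 1 ≤ s.sup g := by
      rw [hsup]
      exact (hg x₀ hx₀).1
    rw [Set.mem_iUnion₂]
    refine ⟨s.sup g, Finset.mem_Ico.mpr ⟨h1M, not_le.mp hMn⟩, ?_⟩
    rw [Set.mem_iInter₂]
    intro x hx
    exact A_mono ρ₀ x (Finset.le_sup hx) (hg x hx).2.1

lemma bad_finite (ρ₀ : Set ℕ) {s : Finset (Set ℕ)} {n : ℕ} (hcard : s.card = n) :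
    (⋃ M ∈ Finset.Ico 1 n, ⋂ x ∈ s, A ρ₀ x M).Finite := by
  apply Set.Finite.biUnion (Finset.Ico 1 n).finite_toSet
  intro M hM
  apply linked
  rw [hcard]
  exact (Finset.mem_Ico.mp (Finset.mem_coe.mp hM)).2


/-! ### Topology of `ω*` -/

/-- The basic (cl)open subsets of `ω*`. -/
def star (C : Set ℕ) : Set OmegaStar := {q | C ∈ q.1}

lemma star_open (C : Set ℕ) : IsOpen (star C) := by
  have h : star C = (Subtype.val : OmegaStar → Ultrafilter ℕ) ⁻¹' {u | C ∈ u} := rfl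
  rw [h]
  exact (ultrafilter_isOpen_basic C).preimage continuous_subtype_val

lemma exists_basic_subset {q : OmegaStar} {U : Set OmegaStar} (hU : IsOpen U) (hq : q ∈ U) :
    ∃ C : Set ℕ, C ∈ q.1 ∧ star C ⊆ U := by
  obtain ⟨W, hW, rfl⟩ := isOpen_induced_iff.mp hU
  obtain ⟨b, hb, hqb, hbW⟩ := ultrafilterBasis_is_basis.exists_subset_of_mem_open hq hW
  obtain ⟨C, rfl⟩ := hb
  exact ⟨C, hqb, fun r hr => hbW hr⟩

lemma finite_not_mem (q : OmegaStar) {s : Set ℕ} (hs : s.Finite) : s ∉ q.1 := by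
  intro hmem
  obtain ⟨a, _, ha⟩ := Ultrafilter.eq_pure_of_finite_mem hs hmem
  exact q.2 a ha

end
end KunenOK

/-- Kunen. There exists a `𝔠`-OK point in `ω*`. -/
theorem exists_continuum_OK_point : ∃ p : OmegaStar, IsOKPoint Cardinal.continuum p := by
  classical
  obtain ⟨p, hp⟩ := KunenOK.exists_good_ultrafilter
  have pfree : ∀ n : ℕ, p ≠ pure n := by
    intro n hpn
    have h1 : ({n}ᶜ : Set ℕ) ∈ p := hp _ (Or.inl (by simp [KunenOK.G0]))
    rw [hpn] at h1
    exact (Ultrafilter.mem_pure.mp h1) rfl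
  refine ⟨⟨p, pfree⟩, ?_⟩
  intro U hU
  have hex : ∀ k : ℕ, ∃ Ck : Set ℕ, Ck ∈ p ∧ KunenOK.star Ck ⊆ U k := fun k =>
    KunenOK.exists_basic_subset (hU k).1 (hU k).2
  choose C hC1 hC2 using hex
  have hpos : ∃ ρ₀, ∀ x : Set ℕ, KunenOK.Bset ρ₀ x C ∈ p := by
    have hLne := KunenOK.Livelt_nonempty C
    rcases KunenOK.core_spec C (KunenOK.Glt C) (KunenOK.Livelt C) hLne with
      ⟨w, _, hc⟩ | ⟨ρ₀, _, _, hc⟩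
    · exfalso
      have hmem : (KunenOK.Dseq C w.1)ᶜ ∈ p := by
        apply hp
        refine Or.inr ⟨C, ?_⟩
        rw [KunenOK.stage_def, hc]
        exact rfl
      have hDmem : KunenOK.Dseq C w.1 ∈ p := by
        have hDeq : KunenOK.Dseq C w.1 = ⋂ k ∈ Finset.range (w.1 + 1), C k := by
          ext a
          simp [KunenOK.Dseq, Nat.lt_succ_iff]
        rw [hDeq]
        exact (Filter.biInter_finset_mem _).mpr (fun k _ => hC1 k)
      exact (Ultrafilter.compl_mem_iff_notMem.mp hmem) hDmem
    · refine ⟨ρ₀, fun x => ?_⟩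
      apply hp
      refine Or.inr ⟨C, ?_⟩
      rw [KunenOK.stage_def, hc]
      exact Or.inr ⟨x, rfl⟩
  obtain ⟨ρ₀, hB⟩ := hpos
  refine ⟨Set ℕ, KunenOK.mk_setNat,
    fun x => KunenOK.star (KunenOK.Bset ρ₀ x C),
    fun x => ⟨KunenOK.star_open _, hB x⟩, ?_⟩
  intro n hn s hcard
  intro q hq
  rw [Set.mem_iInter₂] at hq
  have hqmem : ∀ x ∈ s, KunenOK.Bset ρ₀ x C ∈ q.1 := fun x hx => hq x hx
  have hW : (⋂ x ∈ s, KunenOK.Bset ρ₀ x C) ∈ q.1 :=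
    (Filter.biInter_finset_mem _).mpr hqmem
  have hsne : s.Nonempty := Finset.card_pos.mp (hcard ▸ hn)
  have hUn : KunenOK.Dseq C n ∪ (⋃ M ∈ Finset.Ico 1 n, ⋂ x ∈ s, KunenOK.A ρ₀ x M) ∈ q.1 :=
    Filter.mem_of_superset hW (KunenOK.Binter_subset ρ₀ C s hsne n)
  have hCn : C n ∈ q.1 := by
    rcases Ultrafilter.union_mem_iff.mp hUn with h | h
    · exact Filter.mem_of_superset h (fun a ha => KunenOK.Dseq_subset C n ha)
    · exact absurd h (KunenOK.finite_not_mem q (KunenOK.bad_finite ρ₀ hcard))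
  exact hC2 n hCn
end

section
/- Let X be a regular Hausdorff (T₃) space satisfying the countable chain condition, and let p ∈ X be a non-isolated point. Then p is not an ω₁-OK point. -/
open MeasureTheory Topology ENNReal NNReal

/-- A topological space is *ccc* if every family of pairwise disjoint nonempty open sets is
countable. -/
def CCC (X : Type*) [TopologicalSpace X] : Prop :=
  ∀ 𝒜 : Set (Set X), (∀ U ∈ 𝒜, IsOpen U ∧ U.Nonempty) → 𝒜.PairwiseDisjoint id → 𝒜.Countable

/-- Every member of a bounded-cardinality collection of finsets extends to a maximal member. -/
lemma exists_maximal_mem_aux {ι : Type*} (𝔼 : Set (Finset ι)) (n : ℕ)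
    (hcard : ∀ E ∈ 𝔼, E.card ≤ n) :
    ∀ E ∈ 𝔼, ∃ M ∈ 𝔼, E ⊆ M ∧ ∀ E' ∈ 𝔼, M ⊆ E' → M = E' := by
  suffices h : ∀ k, ∀ E ∈ 𝔼, n ≤ E.card + k → ∃ M ∈ 𝔼, E ⊆ M ∧ ∀ E' ∈ 𝔼, M ⊆ E' → M = E' by
    intro E hE; exact h n E hE (Nat.le_add_left _ _)
  intro k
  induction k with
  | zero =>
    intro E hE hn
    refine ⟨E, hE, subset_rfl, fun E' hE' hsub => ?_⟩
    exact Finset.eq_of_subset_of_card_le hsub ((hcard E' hE').trans (by simpa using hn))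
  | succ k ih =>
    intro E hE hn
    by_cases hmax : ∀ E' ∈ 𝔼, E ⊆ E' → E = E'
    · exact ⟨E, hE, subset_rfl, hmax⟩
    · push_neg at hmax
      obtain ⟨E', hE', hsub, hne⟩ := hmax
      have hc : E.card < E'.card := Finset.card_lt_card (hsub.ssubset_of_ne hne)
      obtain ⟨M, hM, hsub', hmax'⟩ := ih E' hE' (by omega)
      exact ⟨M, hM, hsub.trans hsub', hmax'⟩

/-- In a ccc space, if every point of an open set `W` lies in at most `n` members of a
family of open sets, then only countably many members of the family meet `W`. -/
lemma countable_of_pointBounded {X : Type*} [TopologicalSpace X] (hccc : CCC X)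
    {ι : Type*} (V : ι → Set X) (hV : ∀ i, IsOpen (V i)) (W : Set X) (hW : IsOpen W)
    (n : ℕ) (hb : ∀ x ∈ W, ∀ s : Finset ι, (∀ i ∈ s, x ∈ V i) → s.card ≤ n) :
    {i : ι | (V i ∩ W).Nonempty}.Countable := by
  classical
  set 𝔼 : Set (Finset ι) := {E | (W ∩ ⋂ i ∈ E, V i).Nonempty} with h𝔼
  have hcard : ∀ E ∈ 𝔼, E.card ≤ n := by
    rintro E ⟨x, hxW, hxV⟩
    refine hb x hxW E fun i hi => ?_
    simp only [Set.mem_iInter] at hxV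
    exact hxV i hi
  set M : Set (Finset ι) := {E ∈ 𝔼 | ∀ E' ∈ 𝔼, E ⊆ E' → E = E'} with hM
  set O : Finset ι → Set X := fun E => W ∩ ⋂ i ∈ E, V i with hO
  have hunion : ∀ E ∈ M, ∀ E' ∈ M, (O E ∩ O E').Nonempty → E = E' := by
    rintro E ⟨hE, hEmax⟩ E' ⟨hE', hE'max⟩ ⟨x, hx1, hx2⟩
    have hxU : E ∪ E' ∈ 𝔼 := by
      refine ⟨x, hx1.1, ?_⟩
      simp only [Set.mem_iInter]
      intro i hi
      rcases Finset.mem_union.mp hi with h | h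
      · have := hx1.2; simp only [hO, Set.mem_iInter] at this; exact this i h
      · have := hx2.2; simp only [hO, Set.mem_iInter] at this; exact this i h
    have h1 := hEmax _ hxU Finset.subset_union_left
    have h2 := hE'max _ hxU Finset.subset_union_right
    exact h1.trans h2.symm
  have hMcount : M.Countable := by
    have hinj : Set.InjOn O M := by
      intro E hE E' hE' heq
      apply hunion E hE E' hE'
      rw [heq, Set.inter_self]
      exact hE'.1
    have himg : (O '' M).Countable := by
      apply hccc
      · rintro U ⟨E, hE, rfl⟩
        exact ⟨hW.inter (isOpen_biInter_finset fun i _ => hV i), hE.1⟩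
      · rintro U1 ⟨E, hE, rfl⟩ U2 ⟨E', hE', rfl⟩ hne
        simp only [Function.onFun, id_eq]
        rw [Set.disjoint_iff_inter_eq_empty]
        by_contra hcon
        exact hne (by rw [hunion E hE E' hE' (Set.nonempty_iff_ne_empty.mpr hcon)])
    exact Set.countable_of_injective_of_countable_image hinj himg
  have hsub : {i : ι | (V i ∩ W).Nonempty} ⊆ ⋃ E ∈ M, (E : Set ι) := by
    rintro i ⟨x, hxV, hxW⟩
    have hi : ({i} : Finset ι) ∈ 𝔼 := ⟨x, hxW, by simp [hxV]⟩
    obtain ⟨E, hE, hsub, hmax⟩ := exists_maximal_mem_aux 𝔼 n hcard {i} hi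
    exact Set.mem_biUnion ⟨hE, hmax⟩ (hsub (Finset.mem_singleton_self i))
  exact Set.Countable.mono hsub (hMcount.biUnion fun E _ => E.countable_toSet)

/-- Kunen. In a ccc regular Hausdorff space, no non-isolated point is an
`ω₁`-OK point. -/
theorem not_omega1_OK_of_ccc {X : Type*} [TopologicalSpace X] [T3Space X] (hccc : CCC X)
    (p : X) (hp : ¬ IsOpen ({p} : Set X)) : ¬ IsOKPoint (Cardinal.aleph 1) p := by
  classical
  intro hOK
  -- the family of nonempty open sets whose closure misses p
  set 𝒜 : Set (Set X) := {B | IsOpen B ∧ B.Nonempty ∧ p ∉ closure B} with h𝒜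
  -- every nonempty open set contains a member of 𝒜
  have key : ∀ O : Set X, IsOpen O → O.Nonempty → ∃ B ∈ 𝒜, B ⊆ O := by
    rintro O hO ⟨x, hx⟩
    have hq : ∃ q ∈ O, q ≠ p := by
      by_contra hcon
      push_neg at hcon
      have : O = {p} := Set.eq_singleton_iff_nonempty_unique_mem.mpr ⟨⟨x, hx⟩, hcon⟩
      exact hp (this ▸ hO)
    obtain ⟨q, hqO, hqp⟩ := hq
    have hO' : IsOpen (O \ {p}) := hO.sdiff isClosed_singleton
    have hqO' : q ∈ O \ {p} := ⟨hqO, hqp⟩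
    obtain ⟨t, ht, htc, hts⟩ := exists_mem_nhds_isClosed_subset (hO'.mem_nhds hqO')
    refine ⟨interior t, ⟨isOpen_interior, ⟨q, mem_interior_iff_mem_nhds.mpr ht⟩, ?_⟩,
      interior_subset.trans (hts.trans Set.diff_subset)⟩
    intro hpc
    have : p ∈ t := htc.closure_subset ((closure_mono interior_subset) hpc)
    exact (hts this).2 rfl
  -- a maximal pairwise disjoint subfamily of 𝒜
  obtain ⟨𝒟, h𝒟max⟩ := zorn_subset {𝒟 : Set (Set X) | 𝒟 ⊆ 𝒜 ∧ 𝒟.PairwiseDisjoint id}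
    (fun c hc hchain => ⟨⋃₀ c, ⟨fun B hB => by
        obtain ⟨d, hd, hBd⟩ := Set.mem_sUnion.mp hB
        exact (hc hd).1 hBd,
      by
        rintro B hB B' hB' hne
        obtain ⟨d, hd, hBd⟩ := Set.mem_sUnion.mp hB
        obtain ⟨d', hd', hB'd⟩ := Set.mem_sUnion.mp hB'
        rcases hchain.total hd hd' with h | h
        · exact (hc hd').2 (h hBd) hB'd hne
        · exact (hc hd).2 hBd (h hB'd) hne⟩,
      fun s hs => Set.subset_sUnion_of_mem hs⟩)
  obtain ⟨⟨h𝒟A, h𝒟disj⟩, h𝒟max⟩ := h𝒟max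
  -- the union of 𝒟 is dense
  have hdense : Dense (⋃₀ 𝒟) := by
    rw [dense_iff_inter_open]
    intro O hO hOne
    obtain ⟨B, hB𝒜, hBO⟩ := key O hO hOne
    by_cases hmeets : ∃ D ∈ 𝒟, (B ∩ D).Nonempty
    · obtain ⟨D, hD, x, hxB, hxD⟩ := hmeets
      exact ⟨x, hBO hxB, Set.mem_sUnion.mpr ⟨D, hD, hxD⟩⟩
    · push_neg at hmeets
      have hins : insert B 𝒟 ∈ {𝒟 : Set (Set X) | 𝒟 ⊆ 𝒜 ∧ 𝒟.PairwiseDisjoint id} := by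
        constructor
        · exact Set.insert_subset hB𝒜 h𝒟A
        · refine Set.PairwiseDisjoint.insert h𝒟disj ?_
          intro D hD _
          rw [Set.disjoint_iff_inter_eq_empty]
          exact hmeets D hD
      have : B ∈ 𝒟 := h𝒟max hins (Set.subset_insert B 𝒟) (Set.mem_insert B 𝒟)
      obtain ⟨x, hxB⟩ := hB𝒜.2.1
      exact ⟨x, hBO hxB, Set.mem_sUnion.mpr ⟨B, this, hxB⟩⟩
  -- 𝒟 is countable by ccc and nonempty
  have h𝒟c : 𝒟.Countable := hccc 𝒟 (fun U hU => ⟨(h𝒟A hU).1, (h𝒟A hU).2.1⟩) h𝒟disj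
  have h𝒟ne : 𝒟.Nonempty := by
    obtain ⟨B, hB𝒜, _⟩ := key Set.univ isOpen_univ ⟨p, trivial⟩
    by_contra hcon
    rw [Set.not_nonempty_iff_eq_empty] at hcon
    have hins : {B} ∈ {𝒟 : Set (Set X) | 𝒟 ⊆ 𝒜 ∧ 𝒟.PairwiseDisjoint id} :=
      ⟨Set.singleton_subset_iff.mpr hB𝒜, Set.pairwiseDisjoint_singleton B id⟩
    have := h𝒟max hins (hcon ▸ Set.empty_subset {B}) rfl
    rw [hcon] at this
    simp at this
  -- enumerate 𝒟
  obtain ⟨A, hA⟩ := h𝒟c.exists_eq_range h𝒟ne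
  have hAmem : ∀ m, A m ∈ 𝒜 := fun m => h𝒟A (hA ▸ Set.mem_range_self m)
  have hAdense : Dense (⋃ m, A m) := by
    rwa [hA, Set.sUnion_range] at hdense
  -- the sequence of neighbourhoods of p
  set U : ℕ → Set X := fun n => (⋃ k ∈ Finset.range n, closure (A k))ᶜ with hU
  have hUopen : ∀ n, IsOpen (U n) ∧ p ∈ U n := by
    intro n
    constructor
    · exact (isClosed_biUnion_finset fun k _ => isClosed_closure).isOpen_compl
    · simp only [hU, Set.mem_compl_iff, Set.mem_iUnion]
      rintro ⟨k, _, hk⟩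
      exact (hAmem k).2.2 hk
  obtain ⟨ι, hι, V, hVp, hVs⟩ := hOK U hUopen
  -- each point of A m lies in at most m members of V
  have hb : ∀ m, ∀ x ∈ A m, ∀ s : Finset ι, (∀ i ∈ s, x ∈ V i) → s.card ≤ m := by
    intro m x hx s hs
    by_contra hcon
    push_neg at hcon
    obtain ⟨t, hts, htc⟩ := Finset.exists_subset_card_eq (show m + 1 ≤ s.card from hcon)
    have hxt : x ∈ ⋂ i ∈ t, V i := Set.mem_biInter fun i hi => hs i (hts hi)
    have := hVs (m + 1) (Nat.succ_le_succ (Nat.zero_le m)) t htc hxt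
    simp only [hU, Set.mem_compl_iff, Set.mem_iUnion] at this
    exact this ⟨m, Finset.mem_range.mpr (Nat.lt_succ_self m), subset_closure hx⟩
  -- so only countably many V's meet each A m
  have hBc : ∀ m, {i : ι | (V i ∩ A m).Nonempty}.Countable := fun m =>
    countable_of_pointBounded hccc V (fun i => (hVp i).1) (A m) (hAmem m).1 m (hb m)
  have hScount : {i : ι | ∃ m, (V i ∩ A m).Nonempty}.Countable := by
    have : {i : ι | ∃ m, (V i ∩ A m).Nonempty} = ⋃ m, {i : ι | (V i ∩ A m).Nonempty} := by
      ext i; simp [Set.mem_iUnion]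
    rw [this]
    exact Set.countable_iUnion hBc
  -- but there are ℵ₁ many indices
  have : ∃ i : ι, ∀ m, ¬ (V i ∩ A m).Nonempty := by
    by_contra hcon
    push_neg at hcon
    have : {i : ι | ∃ m, (V i ∩ A m).Nonempty} = Set.univ := by
      ext i
      simp only [Set.mem_setOf_eq, Set.mem_univ, iff_true]
      obtain ⟨m, hm⟩ := hcon i
      exact ⟨m, hm⟩
    rw [this] at hScount
    have : Countable ι := Set.countable_univ_iff.mp hScount
    have h1 : Cardinal.mk ι ≤ Cardinal.aleph0 := Cardinal.mk_le_aleph0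
    rw [hι] at h1
    exact absurd h1 (not_le.mpr Cardinal.aleph0_lt_aleph_one)
  obtain ⟨i, hi⟩ := this
  -- contradiction with density
  have hVne : (V i).Nonempty := ⟨p, (hVp i).2⟩
  obtain ⟨x, hx1, hx2⟩ := hAdense.inter_open_nonempty (V i) (hVp i).1 hVne
  obtain ⟨m, hm⟩ := Set.mem_iUnion.mp hx2
  exact hi m ⟨x, hx1, hm⟩
end

section
/- Let X be a topological space, κ an infinite cardinal, n ∈ ω, and let 𝒜 be a family of nonempty open subsets of X with |𝒜| = κ such that the intersection of any n pairwise distinct members of 𝒜 is empty. Then X contains κ many pairwise disjoint nonempty open subsets. -/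
open MeasureTheory Topology ENNReal

open Cardinal Set

universe u

section Aux

variable {α : Type u}

lemma exists_finset_subset_of_natCast_le {s : Set α} {k : ℕ}
    (h : (k : Cardinal) ≤ #s) : ∃ t : Finset α, ↑t ⊆ s ∧ t.card = k := by
  rcases s.finite_or_infinite with hf | hi
  · rw [Cardinal.mk_set_eq_nat_iff_finset.mpr ⟨hf.toFinset, hf.coe_toFinset, rfl⟩,
      Nat.cast_le] at h
    obtain ⟨t, hts, htc⟩ := Finset.exists_subset_card_eq h
    exact ⟨t, fun x hx => hf.mem_toFinset.1 (hts hx), htc⟩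
  · exact hi.exists_subset_card_eq k

lemma mk_le_mul_of_fibers {β : Type u} (f : α → β) (c : Cardinal.{u})
    (h : ∀ b : β, #{a : α // f a = b} ≤ c) : #α ≤ #β * c := by
  calc #α = #(Σ b : β, {a : α // f a = b}) := (Cardinal.mk_congr (Equiv.sigmaFiberEquiv f)).symm
    _ = Cardinal.sum (fun b : β => #{a : α // f a = b}) := Cardinal.mk_sigma _
    _ ≤ Cardinal.sum (fun _ : β => c) := Cardinal.sum_le_sum _ _ h
    _ = #β * c := Cardinal.sum_const' _ _

/-- Key auxiliary induction: the conclusion is strengthened with the requirement that every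
member of the disjoint family is contained in some member of `𝒜`. -/
theorem key_disjoint_family : ∀ n : ℕ, ∀ {X : Type u} [TopologicalSpace X] (𝒜 : Set (Set X)),
    ℵ₀ ≤ #𝒜 → (∀ U ∈ 𝒜, IsOpen U ∧ U.Nonempty) →
    (∀ S : Finset (Set X), ↑S ⊆ 𝒜 → S.card = n → ⋂₀ (S : Set (Set X)) = ∅) →
    ∃ ℬ : Set (Set X), #ℬ = #𝒜 ∧ (∀ U ∈ ℬ, IsOpen U ∧ U.Nonempty) ∧
      ℬ.PairwiseDisjoint id ∧ ∀ W ∈ ℬ, ∃ U ∈ 𝒜, W ⊆ U := by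
  intro n
  induction n with
  | zero =>
      intro X _ 𝒜 hA hopen hint
      exfalso
      have hempty : (Set.univ : Set X) = ∅ := by
        have := hint ∅ (by simp) (by simp)
        simpa using this
      obtain ⟨U, hU⟩ : 𝒜.Nonempty := by
        rw [← Set.nonempty_coe_sort]
        exact Cardinal.mk_ne_zero_iff.1 (Cardinal.aleph0_pos.trans_le hA).ne'
      obtain ⟨x, -⟩ := (hopen U hU).2
      exact absurd hempty (by simp [Set.eq_empty_iff_forall_notMem]; exact ⟨x⟩)
  | succ n ih =>
      intro X _ 𝒜 hA hopen hint
      classical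
      -- every point belongs to at most `n` members of `𝒜`
      have hx : ∀ x : X, #{U : Set X | U ∈ 𝒜 ∧ x ∈ U} ≤ (n : Cardinal) := by
        intro x
        by_contra hgt
        rw [not_le] at hgt
        have h2 : ((n + 1 : ℕ) : Cardinal) ≤ #{U : Set X | U ∈ 𝒜 ∧ x ∈ U} := by
          rw [Cardinal.nat_succ]
          exact Order.succ_le_of_lt hgt
        obtain ⟨t, hts, htc⟩ := exists_finset_subset_of_natCast_le h2
        have hempty := hint t (fun U hU => (hts hU).1) htc
        have hxmem : x ∈ ⋂₀ (t : Set (Set X)) := fun U hU => (hts hU).2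
        rw [hempty] at hxmem
        exact hxmem
      -- 𝒜 is nonempty
      have hAne : 𝒜.Nonempty := by
        rw [← Set.nonempty_coe_sort]
        exact Cardinal.mk_ne_zero_iff.1 (Cardinal.aleph0_pos.trans_le hA).ne'
      -- n ≥ 1
      rcases Nat.eq_zero_or_pos n with hn0 | hn1
      · exfalso
        obtain ⟨U, hU⟩ := hAne
        obtain ⟨x, hxU⟩ := (hopen U hU).2
        have h1 : (1 : Cardinal) ≤ #{V : Set X | V ∈ 𝒜 ∧ x ∈ V} :=
          Cardinal.one_le_iff_ne_zero.2 (Cardinal.mk_ne_zero_iff.2 ⟨⟨U, hU, hxU⟩⟩)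
        have h2 := h1.trans (hx x)
        rw [hn0] at h2
        simpa using h2
      -- a maximal pairwise disjoint subfamily
      obtain ⟨D, -, hD⟩ := zorn_subset_nonempty
        {E : Set (Set X) | E ⊆ 𝒜 ∧ E.PairwiseDisjoint id}
        (fun c hcS hchain _ => ⟨⋃₀ c, ⟨Set.sUnion_subset fun E hE => (hcS hE).1, by
          intro U hU V hV hne
          obtain ⟨E1, hE1, hU1⟩ := hU
          obtain ⟨E2, hE2, hV2⟩ := hV
          rcases hchain.total hE1 hE2 with h12 | h21
          · exact (hcS hE2).2 (h12 hU1) hV2 hne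
          · exact (hcS hE1).2 hU1 (h21 hV2) hne⟩,
          fun E hE => Set.subset_sUnion_of_mem hE⟩)
        ∅ ⟨Set.empty_subset _, Set.pairwiseDisjoint_empty⟩
      have hD𝒜 : D ⊆ 𝒜 := hD.prop.1
      have hDdisj : D.PairwiseDisjoint id := hD.prop.2
      -- every member of 𝒜 meets a member of D
      have hmeet : ∀ U ∈ 𝒜, ∃ V ∈ D, (U ∩ V).Nonempty := by
        intro U hU
        by_contra hcon
        push_neg at hcon
        have hins : insert U D ∈ {E : Set (Set X) | E ⊆ 𝒜 ∧ E.PairwiseDisjoint id} := by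
          refine ⟨Set.insert_subset hU hD𝒜, hDdisj.insert fun V hV hne => ?_⟩
          rw [Set.disjoint_iff_inter_eq_empty]
          exact hcon V hV
        have hsub : insert U D ⊆ D := hD.2 hins (Set.subset_insert _ _)
        have hUD : U ∈ D := hsub (Set.mem_insert _ _)
        have hUU := hcon U hUD
        rw [Set.inter_self] at hUU
        exact (hopen U hU).2.ne_empty hUU
      have hDle : #D ≤ #𝒜 := Cardinal.mk_le_mk_of_subset hD𝒜
      rcases eq_or_lt_of_le hDle with hDeq | hDlt
      · exact ⟨D, hDeq, fun U hU => hopen U (hD𝒜 hU), hDdisj,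
          fun W hW => ⟨W, hD𝒜 hW, subset_rfl⟩⟩
      -- the families of traces on members of D
      set A : Set X → Set (Set X) := fun V => {U | U ∈ 𝒜 ∧ U ≠ V ∧ (U ∩ V).Nonempty}
        with hAdef
      set F : Set X → Set (Set X) := fun V => (fun U => U ∩ V) '' A V with hFdef
      have hmemF : ∀ V W : Set X, W ∈ F V ↔ ∃ U, U ∈ A V ∧ U ∩ V = W := by
        intro V W
        rw [hFdef]
        exact Set.mem_image _ _ _
      have hcover : 𝒜 ⊆ ⋃ V ∈ D, insert V (A V) := by
        intro U hU
        obtain ⟨V, hVD, hUV⟩ := hmeet U hU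
        refine Set.mem_biUnion hVD ?_
        by_cases hUVeq : U = V
        · exact hUVeq ▸ Set.mem_insert _ _
        · exact Set.mem_insert_of_mem _ (by rw [hAdef]; exact ⟨hU, hUVeq, hUV⟩)
      have hmemA : ∀ V U : Set X, U ∈ A V ↔ U ∈ 𝒜 ∧ U ≠ V ∧ (U ∩ V).Nonempty := by
        intro V U
        rw [hAdef]
        rfl
      -- fibers of the trace map have at most n elements
      have hfiber : ∀ V : Set X, ∀ W ∈ F V,
          #{U : Set X | U ∈ A V ∧ U ∩ V = W} ≤ (n : Cardinal) := by
        intro V W hW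
        obtain ⟨U0, hU0, rfl⟩ := (hmemF V W).1 hW
        obtain ⟨x, hxW⟩ := ((hmemA V U0).1 hU0).2.2
        refine le_trans (Cardinal.mk_le_mk_of_subset ?_) (hx x)
        rintro U ⟨hUA, hUW⟩
        refine ⟨((hmemA V U).1 hUA).1, ?_⟩
        have hxU : x ∈ U ∩ V := hUW ▸ hxW
        exact hxU.1
      have hAF : ∀ V : Set X, #(A V) ≤ #(F V) * (n : Cardinal) := by
        intro V
        refine mk_le_mul_of_fibers
          (fun U : A V => (⟨(U : Set X) ∩ V, (hmemF V _).2 ⟨U.1, U.2, rfl⟩⟩ : F V))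
          (n : Cardinal) ?_
        intro b
        refine le_trans (Cardinal.mk_le_of_injective (f := fun a =>
            (⟨a.1.1, a.1.2, congrArg Subtype.val a.2⟩ :
              {U : Set X | U ∈ A V ∧ U ∩ V = (b : Set X)})) ?_) (hfiber V b.1 b.2)
        intro a1 a2 hEq
        have h' := congrArg Subtype.val hEq
        exact Subtype.ext (Subtype.ext h')
      have hFopen : ∀ V ∈ D, ∀ W ∈ F V, IsOpen W ∧ W.Nonempty := by
        intro V hV W hW
        obtain ⟨U, hU, rfl⟩ := (hmemF V W).1 hW
        obtain ⟨hU1, hU2, hU3⟩ := (hmemA V U).1 hU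
        exact ⟨(hopen U hU1).1.inter (hopen V (hD𝒜 hV)).1, hU3⟩
      have hFint : ∀ V ∈ D, ∀ S : Finset (Set X), ↑S ⊆ F V → S.card = n →
          ⋂₀ (S : Set (Set X)) = ∅ := by
        intro V hV S hS hScard
        rw [Set.eq_empty_iff_forall_notMem]
        intro x hxS
        set g : Set X → Set X := fun W => if h : W ∈ F V then ((hmemF V W).1 h).choose else ∅
          with hgdef
        have hg : ∀ W ∈ S, g W ∈ A V ∧ g W ∩ V = W := by
          intro W hW
          have hWF : W ∈ F V := hS hW
          rw [hgdef]
          simp only [dif_pos hWF]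
          exact ⟨((hmemF V W).1 hWF).choose_spec.1, ((hmemF V W).1 hWF).choose_spec.2⟩
        have hginj : Set.InjOn g S := by
          intro W1 h1 W2 h2 hEq
          rw [← (hg W1 h1).2, ← (hg W2 h2).2, hEq]
        have hVnot : V ∉ S.image g := by
          intro hmem
          obtain ⟨W, hW, hWg⟩ := Finset.mem_image.1 hmem
          exact ((hmemA V _).1 (hg W hW).1).2.1 hWg
        have hcard' : (insert V (S.image g)).card = n + 1 := by
          rw [Finset.card_insert_of_notMem hVnot, Finset.card_image_of_injOn hginj, hScard]
        have hsub : ↑(insert V (S.image g)) ⊆ 𝒜 := by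
          intro U hU
          simp only [Finset.coe_insert, Set.mem_insert_iff, Finset.coe_image, Set.mem_image,
            Finset.mem_coe] at hU
          rcases hU with rfl | ⟨W, hW, rfl⟩
          · exact hD𝒜 hV
          · exact ((hmemA V _).1 (hg W hW).1).1
        have hxmem : x ∈ ⋂₀ (↑(insert V (S.image g)) : Set (Set X)) := by
          intro U hU
          simp only [Finset.coe_insert, Set.mem_insert_iff, Finset.coe_image, Set.mem_image,
            Finset.mem_coe] at hU
          rcases hU with rfl | ⟨W, hW, rfl⟩
          · obtain ⟨W0, hW0⟩ := Finset.card_pos.1 (hScard ▸ hn1)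
            have hxW0 : x ∈ W0 := hxS _ (Finset.mem_coe.2 hW0)
            rw [← (hg W0 hW0).2] at hxW0
            exact hxW0.2
          · have hxW : x ∈ W := hxS _ (Finset.mem_coe.2 hW)
            rw [← (hg W hW).2] at hxW
            exact hxW.1
        have hie := hint _ hsub hcard'
        rw [hie] at hxmem
        exact hxmem
      have IHapp : ∀ V ∈ D, ℵ₀ ≤ #(F V) →
          ∃ ℬ : Set (Set X), #ℬ = #(F V) ∧ (∀ U ∈ ℬ, IsOpen U ∧ U.Nonempty) ∧
            ℬ.PairwiseDisjoint id ∧ ∀ W ∈ ℬ, (∃ U ∈ 𝒜, W ⊆ U) ∧ W ⊆ V := by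
        intro V hV hinf
        obtain ⟨ℬ, h1, h2, h3, h4⟩ := ih (F V) hinf (hFopen V hV) (hFint V hV)
        refine ⟨ℬ, h1, h2, h3, ?_⟩
        intro W hW
        obtain ⟨W', hW', hsubW⟩ := h4 W hW
        obtain ⟨U, hU, rfl⟩ := (hmemF V W').1 hW'
        exact ⟨⟨U, ((hmemA V U).1 hU).1, hsubW.trans Set.inter_subset_left⟩,
          hsubW.trans Set.inter_subset_right⟩
      have hFle : ∀ V : Set X, #(F V) ≤ #𝒜 := by
        intro V
        rw [hFdef]
        exact le_trans Cardinal.mk_image_le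
          (Cardinal.mk_le_mk_of_subset fun U hU => ((hmemA V U).1 hU).1)
      have claim : ∀ c : Cardinal, ℵ₀ ≤ c → #D ≤ c → (∀ V ∈ D, #(F V) ≤ c) → #𝒜 ≤ c := by
        intro c hc hDc hFc
        have hIV : ∀ V : D, #(insert (V : Set X) (A V) : Set (Set X)) ≤ c := by
          rintro ⟨V, hV⟩
          have h1 : #(A V) ≤ c := by
            refine le_trans (hAF V) ?_
            calc #(F V) * (n : Cardinal) ≤ c * ℵ₀ :=
                mul_le_mul' (hFc V hV) (Cardinal.nat_lt_aleph0 n).le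
              _ = c := Cardinal.mul_aleph0_eq hc
          calc #(insert V (A V) : Set (Set X)) ≤ #(A V) + 1 := Cardinal.mk_insert_le
            _ ≤ c + c := add_le_add h1 (le_trans Cardinal.one_lt_aleph0.le hc)
            _ = c := Cardinal.add_eq_self hc
        calc #𝒜 ≤ #(⋃ V ∈ D, insert V (A V)) := Cardinal.mk_le_mk_of_subset hcover
          _ ≤ Cardinal.sum (fun V : D => #(insert (V : Set X) (A V) : Set (Set X))) := by
              rw [Set.biUnion_eq_iUnion]
              exact Cardinal.mk_iUnion_le_sum_mk
          _ ≤ Cardinal.sum (fun _ : D => c) := Cardinal.sum_le_sum _ _ hIV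
          _ = #D * c := Cardinal.sum_const' _ _
          _ ≤ c * c := mul_le_mul' hDc le_rfl
          _ = c := Cardinal.mul_eq_self hc
      by_cases hbig : ∃ V ∈ D, #(F V) = #𝒜
      · obtain ⟨V, hVD, hVF⟩ := hbig
        obtain ⟨ℬ, h1, h2, h3, h4⟩ := IHapp V hVD (hVF ▸ hA)
        exact ⟨ℬ, h1.trans hVF, h2, h3, fun W hW => (h4 W hW).1⟩
      · push_neg at hbig
        have hFlt : ∀ V ∈ D, #(F V) < #𝒜 := fun V hV => lt_of_le_of_ne (hFle V) (hbig V hV)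
        have hgtℵ : ℵ₀ < #𝒜 := by
          rcases lt_or_eq_of_le hA with h | h
          · exact h
          · exfalso
            have hDfin : D.Finite := Cardinal.lt_aleph0_iff_set_finite.1 (hDlt.trans_eq h.symm)
            have hfin : 𝒜.Finite := by
              refine Set.Finite.subset (Set.Finite.biUnion hDfin fun V hV => ?_) hcover
              refine Set.Finite.insert _ (Cardinal.lt_aleph0_iff_set_finite.1 ?_)
              exact lt_of_le_of_lt (hAF V)
                (Cardinal.mul_lt_aleph0 ((hFlt V hV).trans_eq h.symm) (Cardinal.nat_lt_aleph0 n))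
            exact absurd hfin.lt_aleph0 (not_lt.2 hA)
        have hgt : ∀ c : Cardinal, ℵ₀ ≤ c → #D ≤ c → c < #𝒜 → ∃ V ∈ D, c < #(F V) := by
          intro c h1 h2 h3
          by_contra hcon
          push_neg at hcon
          exact absurd (claim c h1 h2 hcon) (not_le.2 h3)
        set J := {V : Set X | V ∈ D ∧ ℵ₀ ≤ #(F V)} with hJdef
        have hmemJ : ∀ V : Set X, V ∈ J ↔ V ∈ D ∧ ℵ₀ ≤ #(F V) := by
          intro V
          rw [hJdef]
          rfl
        have hBex : ∀ V : J, ∃ ℬ : Set (Set X), #ℬ = #(F (V : Set X)) ∧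
            (∀ U ∈ ℬ, IsOpen U ∧ U.Nonempty) ∧ ℬ.PairwiseDisjoint id ∧
            ∀ W ∈ ℬ, (∃ U ∈ 𝒜, W ⊆ U) ∧ W ⊆ (V : Set X) :=
          fun V => IHapp V ((hmemJ V).1 V.2).1 ((hmemJ V).1 V.2).2
        choose B hB1 hB2 hB3 hB4 using hBex
        refine ⟨⋃ V : J, B V, ?_, ?_, ?_, ?_⟩
        · apply le_antisymm
          · calc #(⋃ V : J, B V) ≤ Cardinal.sum (fun V : J => #(B V)) :=
                Cardinal.mk_iUnion_le_sum_mk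
              _ ≤ Cardinal.sum (fun _ : J => #𝒜) :=
                Cardinal.sum_le_sum _ _ (fun V => (hB1 V).trans_le (hFle V))
              _ = #J * #𝒜 := Cardinal.sum_const' _ _
              _ ≤ #𝒜 * #𝒜 := mul_le_mul'
                (le_trans (Cardinal.mk_le_mk_of_subset fun V hV => ((hmemJ V).1 hV).1) hDle)
                le_rfl
              _ = #𝒜 := Cardinal.mul_eq_self hA
          · by_contra hlt
            rw [not_le] at hlt
            obtain ⟨V, hVD, hVgt⟩ := hgt (max (max #(⋃ V : J, B V) ℵ₀) #D)
              (le_max_of_le_left (le_max_right _ _)) (le_max_right _ _)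
              (max_lt (max_lt hlt hgtℵ) hDlt)
            have hVJ : V ∈ J := (hmemJ V).2
              ⟨hVD, le_trans (le_max_of_le_left (le_max_right _ _)) hVgt.le⟩
            have hBF : #(F V) = #(B ⟨V, hVJ⟩) := (hB1 ⟨V, hVJ⟩).symm
            have hsubB : B ⟨V, hVJ⟩ ⊆ ⋃ V : J, B V := Set.subset_iUnion B ⟨V, hVJ⟩
            have h2 : #(F V) ≤ #(⋃ V : J, B V) := hBF ▸ Cardinal.mk_le_mk_of_subset hsubB
            have h3 : #(F V) ≤ max (max #(⋃ V : J, B V) ℵ₀) #D :=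
              h2.trans (le_max_of_le_left (le_max_left _ _))
            exact absurd hVgt (not_lt.2 h3)
        · intro U hU
          obtain ⟨V, hUV⟩ := Set.mem_iUnion.1 hU
          exact hB2 V U hUV
        · intro W1 hW1 W2 hW2 hne
          obtain ⟨V1, hWV1⟩ := Set.mem_iUnion.1 hW1
          obtain ⟨V2, hWV2⟩ := Set.mem_iUnion.1 hW2
          by_cases hV : V1 = V2
          · subst hV
            exact hB3 V1 hWV1 hWV2 hne
          · have hVne : (V1 : Set X) ≠ (V2 : Set X) := fun h => hV (Subtype.ext h)
            have hdisj : Disjoint (V1 : Set X) (V2 : Set X) :=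
              hDdisj ((hmemJ V1).1 V1.2).1 ((hmemJ V2).1 V2.2).1 hVne
            exact hdisj.mono (hB4 V1 W1 hWV1).2 (hB4 V2 W2 hWV2).2
        · intro W hW
          obtain ⟨V, hWV⟩ := Set.mem_iUnion.1 hW
          exact (hB4 V W hWV).1

end Aux

/-- If `𝒜` is a family of `κ` many nonempty open subsets of `X` (`κ`
infinite) such that any `n` pairwise distinct members of `𝒜` have empty intersection, then `X`
contains `κ` many pairwise disjoint nonempty open sets. -/
theorem exists_disjoint_family_of_n_empty_intersections {X : Type*} [TopologicalSpace X]
    (κ : Cardinal) (hκ : Cardinal.aleph0 ≤ κ) (n : ℕ)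
    (𝒜 : Set (Set X)) (hcard : Cardinal.mk 𝒜 = κ)
    (hopen : ∀ U ∈ 𝒜, IsOpen U ∧ U.Nonempty)
    (hint : ∀ S : Finset (Set X), ↑S ⊆ 𝒜 → S.card = n → ⋂₀ (S : Set (Set X)) = ∅) :
    ∃ ℬ : Set (Set X), Cardinal.mk ℬ = κ ∧ (∀ U ∈ ℬ, IsOpen U ∧ U.Nonempty) ∧
      ℬ.PairwiseDisjoint id := by
  subst hcard
  obtain ⟨ℬ, h1, h2, h3, -⟩ := key_disjoint_family n 𝒜 hκ hopen hint
  exact ⟨ℬ, h1, h2, h3⟩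
end

section
/- Let μ be a non-atomic finitely additive probability measure on the Boolean algebra of clopen subsets of 2^ω. Then for every k ≥ 1 and every ε > 0 there is a partition {S₁, …, S_k} of 2^ω into clopen sets such that |μ(S_i) − 1/k| < ε for every i ≤ k. -/
open MeasureTheory Topology ENNReal

/-- Union of a list of sets. -/
def LU (L : List (Set (ℕ → Bool))) : Set (ℕ → Bool) := L.foldr (· ∪ ·) ∅

lemma mem_LU {L : List (Set (ℕ → Bool))} {x : ℕ → Bool} :
    x ∈ LU L ↔ ∃ t ∈ L, x ∈ t := by
  induction L with
  | nil => simp [LU]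
  | cons a l ih =>
      simp only [LU, List.foldr_cons, Set.mem_union, List.mem_cons] at ih ⊢
      constructor
      · rintro (h | h)
        · exact ⟨a, Or.inl rfl, h⟩
        · obtain ⟨t, ht, hxt⟩ := ih.1 h
          exact ⟨t, Or.inr ht, hxt⟩
      · rintro ⟨t, rfl | ht, hxt⟩
        · exact Or.inl hxt
        · exact Or.inr (ih.2 ⟨t, ht, hxt⟩)

lemma clopen_LU {L : List (Set (ℕ → Bool))} (h : ∀ t ∈ L, IsClopen t) : IsClopen (LU L) := by
  induction L with
  | nil => exact isClopen_empty
  | cons a l ih =>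
      exact (h a (by simp)).union (ih fun t ht => h t (by simp [ht]))

/-- If `m` is a non-atomic finitely additive probability measure on the
Boolean algebra of clopen subsets of `2^ω`, then for every `k ≥ 1` and `ε > 0` there is a
partition of `2^ω` into clopen sets `S 1, …, S k` with `|m (S i) - 1/k| < ε` for all `i`. -/
theorem clopen_partition_of_nonatomic_finitely_additive
    (m : Set (ℕ → Bool) → ℝ)
    (hnn : ∀ s : Set (ℕ → Bool), IsClopen s → 0 ≤ m s)
    (hone : m Set.univ = 1)
    (hadd : ∀ s t : Set (ℕ → Bool), IsClopen s → IsClopen t → Disjoint s t →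
      m (s ∪ t) = m s + m t)
    (hna : ∀ ε : ℝ, 0 < ε → ∃ P : Finset (Set (ℕ → Bool)),
      (↑P : Set (Set (ℕ → Bool))).PairwiseDisjoint id ∧
      (∀ s ∈ P, IsClopen s ∧ m s < ε) ∧ ⋃₀ (P : Set (Set (ℕ → Bool))) = Set.univ)
    (k : ℕ) (hk : 1 ≤ k) (ε : ℝ) (hε : 0 < ε) :
    ∃ S : Fin k → Set (ℕ → Bool), (∀ i, IsClopen (S i)) ∧
      Pairwise (Function.onFun Disjoint S) ∧ (⋃ i, S i) = Set.univ ∧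
      ∀ i, |m (S i) - 1 / k| < ε := by
  classical
  obtain ⟨P, hPd, hPm, hPc⟩ := hna ε hε
  set L : List (Set (ℕ → Bool)) := P.toList with hLdef
  have hmemL : ∀ t, t ∈ L ↔ t ∈ P := fun t => Finset.mem_toList
  have hLc : ∀ t ∈ L, IsClopen t := fun t ht => (hPm t ((hmemL t).1 ht)).1
  have hLε : ∀ t ∈ L, m t < ε := fun t ht => (hPm t ((hmemL t).1 ht)).2
  have hLnn : ∀ t ∈ L, 0 ≤ m t := fun t ht => hnn t (hLc t ht)
  have hLpw : L.Pairwise Disjoint := by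
    refine List.Pairwise.imp_of_mem ?_ (P.nodup_toList)
    intro a b ha hb hne
    exact hPd ((hmemL a).1 ha) ((hmemL b).1 hb) hne
  have hLuniv : LU L = Set.univ := by
    apply Set.eq_univ_of_forall
    intro x
    have : x ∈ ⋃₀ (P : Set (Set (ℕ → Bool))) := by rw [hPc]; trivial
    obtain ⟨t, ht, hxt⟩ := this
    exact mem_LU.2 ⟨t, (hmemL t).2 ht, hxt⟩
  -- measure of empty set is 0
  have hm0 : m ∅ = 0 := by
    have := hadd ∅ ∅ isClopen_empty isClopen_empty (disjoint_bot_left)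
    simp at this; linarith
  -- measure of disjoint union of a list
  have hmLU : ∀ M : List (Set (ℕ → Bool)), (∀ t ∈ M, IsClopen t) → M.Pairwise Disjoint →
      m (LU M) = (M.map m).sum := by
    intro M
    induction M with
    | nil => intro _ _; simpa [LU]
    | cons a l ih =>
        intro hc hp
        have hdis : Disjoint a (LU l) := by
          rw [Set.disjoint_left]
          intro x hxa hxl
          obtain ⟨t, ht, hxt⟩ := mem_LU.1 hxl
          exact (Set.disjoint_left.1 (List.rel_of_pairwise_cons hp ht)) hxa hxt
        have : m (a ∪ LU l) = m a + m (LU l) :=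
          hadd a (LU l) (hc a (by simp)) (clopen_LU fun t ht => hc t (by simp [ht])) hdis
        have hrec := ih (fun t ht => hc t (by simp [ht])) (List.Pairwise.of_cons hp)
        rw [show LU (a :: l) = a ∪ LU l from rfl, this, hrec, List.map_cons, List.sum_cons]
  set n := L.length with hndef
  -- prefix sums
  set s : ℕ → ℝ := fun a => ((L.take a).map m).sum with hsdef
  have hseg_sub : ∀ a b : ℕ, ((L.take b).drop a).Sublist L :=
    fun a b => (List.drop_sublist a (L.take b)).trans (List.take_sublist b L)
  have hsplit : ∀ a b : ℕ, a ≤ b → s b = s a + (((L.take b).drop a).map m).sum := by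
    intro a b hab
    have hdecomp : L.take b = L.take a ++ (L.take b).drop a := by
      conv_lhs => rw [← List.take_append_drop a (L.take b)]
      rw [List.take_take, min_eq_left hab]
    have hmap : (L.take b).map m = (L.take a).map m ++ ((L.take b).drop a).map m := by
      rw [← List.map_append, ← hdecomp]
    show ((L.take b).map m).sum = ((L.take a).map m).sum + _
    rw [hmap, List.sum_append]
  have hs_mono : ∀ a b : ℕ, a ≤ b → s a ≤ s b := by
    intro a b hab
    rw [hsplit a b hab]
    have : 0 ≤ (((L.take b).drop a).map m).sum := by
      apply List.sum_nonneg
      intro x hx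
      obtain ⟨t, ht, rfl⟩ := List.mem_map.1 hx
      exact hLnn t ((hseg_sub a b).mem ht)
    linarith
  have hs0 : s 0 = 0 := by simp [hsdef]
  have hsn : s n = 1 := by
    have h1 : L.take n = L := List.take_length
    show ((L.take n).map m).sum = 1
    rw [h1, ← hmLU L hLc hLpw, hLuniv, hone]
  have hstep : ∀ j, j < n → s (j + 1) < s j + ε := by
    intro j hj
    have hj' : j < L.length := hj
    have htake : L.take (j + 1) = L.take j ++ [L[j]] := by
      rw [List.take_succ]; simp [List.getElem?_eq_getElem hj']
    have hmap : (L.take (j+1)).map m = (L.take j).map m ++ [m L[j]] := by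
      rw [htake, List.map_append, List.map_singleton]
    have : s (j + 1) = s j + m L[j] := by
      show ((L.take (j+1)).map m).sum = ((L.take j).map m).sum + m L[j]
      rw [hmap, List.sum_append, List.sum_singleton]
    rw [this]
    have := hLε L[j] (List.getElem_mem hj')
    linarith
  have hkpos : (0:ℝ) < (k:ℝ) := by exact_mod_cast Nat.lt_of_lt_of_le Nat.zero_lt_one hk
  -- the cut points
  set pred : ℕ → ℕ → Prop := fun i j => ((i:ℝ)/(k:ℝ) ≤ s j ∧ i < k) ∨ n ≤ j with hpreddef
  have hex : ∀ i : ℕ, ∃ j, pred i j := fun i => ⟨n, Or.inr le_rfl⟩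
  set c : ℕ → ℕ := fun i => Nat.find (hex i) with hcdef
  have hc_le_n : ∀ i, c i ≤ n := fun i => Nat.find_min' (hex i) (Or.inr le_rfl)
  have hc0 : c 0 = 0 := by
    have : pred 0 0 := Or.inl ⟨by simpa using hs0.ge, Nat.lt_of_lt_of_le Nat.zero_lt_one hk⟩
    exact Nat.le_zero.1 (Nat.find_min' (hex 0) this)
  have hck : c k = n := by
    refine le_antisymm (hc_le_n k) ?_
    have := Nat.find_spec (hex k)
    rcases this with ⟨_, hkk⟩ | h
    · exact absurd hkk (lt_irrefl k)
    · exact h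
  have hc_mono : ∀ i i' : ℕ, i ≤ i' → i' ≤ k → c i ≤ c i' := by
    intro i i' hii hik
    rcases eq_or_lt_of_le hik with rfl | hik'
    · rcases eq_or_lt_of_le hii with rfl | hii'
      · exact le_rfl
      · rw [hck]; exact hc_le_n i
    · apply Nat.find_min' (hex i)
      have := Nat.find_spec (hex i')
      rcases this with ⟨hle, _⟩ | h
      · have hfrac : (i:ℝ)/(k:ℝ) ≤ (i':ℝ)/(k:ℝ) := by
          gcongr

        exact Or.inl ⟨le_trans hfrac hle, Nat.lt_of_le_of_lt hii hik'⟩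
      · exact Or.inr h
  have hlow : ∀ i : ℕ, i ≤ k → (i:ℝ)/(k:ℝ) ≤ s (c i) := by
    intro i hik
    have := Nat.find_spec (hex i)
    rcases this with ⟨hle, _⟩ | h
    · exact hle
    · have hci : c i = n := le_antisymm (hc_le_n i) h
      rw [hci, hsn]
      rw [div_le_one hkpos]
      exact_mod_cast hik
  have hup : ∀ i : ℕ, i ≤ k → s (c i) < (i:ℝ)/(k:ℝ) + ε := by
    intro i hik
    rcases Nat.eq_zero_or_pos (c i) with h0 | hpos
    · rw [h0, hs0]
      have : (0:ℝ) ≤ (i:ℝ)/(k:ℝ) := div_nonneg (Nat.cast_nonneg i) hkpos.le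
      linarith
    · obtain ⟨j, hci⟩ : ∃ j, c i = j + 1 := ⟨c i - 1, by omega⟩
      have hmin := Nat.find_min (hex i) (show j < c i by omega)
      simp only [hpreddef, not_or, not_le] at hmin
      have hjn : j < n := hmin.2
      rw [hci]
      rcases lt_or_ge i k with hik' | hik'
      · have hsj : s j < (i:ℝ)/(k:ℝ) := by
          by_contra hcon
          push_neg at hcon
          exact hmin.1 ⟨hcon, hik'⟩
        have := hstep j hjn
        linarith
      · have hik2 : i = k := le_antisymm hik hik'
        have hle : s (j + 1) ≤ s n := by
          rw [← hci]; exact hs_mono _ _ (hc_le_n i)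
        rw [hsn] at hle
        have h1k : (i:ℝ)/(k:ℝ) = 1 := by
          rw [hik2, div_self hkpos.ne']
        linarith
  -- the partition
  refine ⟨fun i => LU ((L.take (c (i + 1))).drop (c i)), ?_, ?_, ?_, ?_⟩
  · intro i
    exact clopen_LU fun t ht => hLc t ((hseg_sub _ _).mem ht)
  · -- pairwise disjoint
    have key : ∀ i j : Fin k, (i:ℕ) < (j:ℕ) →
        Disjoint (LU ((L.take (c (i + 1))).drop (c i))) (LU ((L.take (c (j + 1))).drop (c j))) := by
      intro i j hij
      have hb_le : c ((i:ℕ) + 1) ≤ c j := hc_mono _ _ (by omega) (by omega)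
      have hsub1 : ((L.take (c ((i:ℕ) + 1))).drop (c i)).Sublist (L.take (c j)) := by
        refine (List.drop_sublist _ _).trans ?_
        have := List.take_sublist (c ((i:ℕ) + 1)) (L.take (c j))
        rwa [List.take_take, min_eq_left hb_le] at this
      have hsub2 : ((L.take (c ((j:ℕ) + 1))).drop (c j)).Sublist (L.drop (c j)) := by
        rw [List.drop_take]
        exact List.take_sublist _ _
      have hsub : (((L.take (c ((i:ℕ) + 1))).drop (c i)) ++
          ((L.take (c ((j:ℕ) + 1))).drop (c j))).Sublist L := by
        have := hsub1.append hsub2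
        rwa [List.take_append_drop] at this
      have hpw := (List.pairwise_append.1 (hLpw.sublist hsub)).2.2
      rw [Set.disjoint_left]
      intro x hx1 hx2
      obtain ⟨t1, ht1, hxt1⟩ := mem_LU.1 hx1
      obtain ⟨t2, ht2, hxt2⟩ := mem_LU.1 hx2
      exact Set.disjoint_left.1 (hpw t1 ht1 t2 ht2) hxt1 hxt2
    intro i j hij
    rcases lt_or_gt_of_ne (Fin.val_ne_of_ne hij) with h | h
    · exact key i j h
    · exact (key j i h).symm
  · -- covering
    apply Set.eq_univ_of_forall
    intro x
    have hx : x ∈ LU L := by rw [hLuniv]; trivial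
    obtain ⟨t, ht, hxt⟩ := mem_LU.1 hx
    obtain ⟨j, hj, rfl⟩ := List.mem_iff_getElem.1 ht
    have hfind : ∀ i : ℕ, i ≤ k → j < c i → ∃ i', i' < i ∧ c i' ≤ j ∧ j < c (i' + 1) := by
      intro i
      induction i with
      | zero => intro _ h; rw [hc0] at h; omega
      | succ i ih =>
          intro hik h
          rcases le_or_gt (c i) j with hle | hlt
          · exact ⟨i, by omega, hle, h⟩
          · obtain ⟨i', h1, h2, h3⟩ := ih (by omega) hlt
            exact ⟨i', by omega, h2, h3⟩
    have hjn : j < c k := by rw [hck]; exact hj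
    obtain ⟨i', hi'k, hle, hlt⟩ := hfind k le_rfl hjn
    refine Set.mem_iUnion.2 ⟨⟨i', hi'k⟩, ?_⟩
    apply mem_LU.2
    refine ⟨L[j], ?_, hxt⟩
    have hlen : j - c i' < ((L.take (c (i' + 1))).drop (c i')).length := by
      simp only [List.length_drop, List.length_take]
      have := hc_le_n (i' + 1)
      omega
    have hgets : ((L.take (c (i' + 1))).drop (c i'))[j - c i']'hlen = L[j] := by
      rw [List.getElem_drop]
      have hlt2 : c i' + (j - c i') < (L.take (c (i' + 1))).length := by
        simp only [List.length_take]
        have := hc_le_n (i' + 1)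
        omega
      rw [List.getElem_take]
      congr 1
      omega
    rw [← hgets]
    exact List.getElem_mem hlen
  · -- measure estimate
    intro i
    have hik : (i:ℕ) < k := i.isLt
    have hi1k : (i:ℕ) + 1 ≤ k := hik
    have hcle : c i ≤ c ((i:ℕ) + 1) := hc_mono _ _ (by omega) hi1k
    have hmS : m (LU ((L.take (c ((i:ℕ) + 1))).drop (c i))) = s (c ((i:ℕ) + 1)) - s (c i) := by
      have hclo : ∀ t ∈ (L.take (c ((i:ℕ) + 1))).drop (c i), IsClopen t :=
        fun t ht => hLc t ((hseg_sub _ _).mem ht)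
      have hpw : ((L.take (c ((i:ℕ) + 1))).drop (c i)).Pairwise Disjoint :=
        hLpw.sublist (hseg_sub _ _)
      rw [hmLU _ hclo hpw, hsplit (c i) (c ((i:ℕ) + 1)) hcle]
      ring
    rw [hmS]
    have hl1 := hlow ((i:ℕ) + 1) hi1k
    have hu1 := hup ((i:ℕ) + 1) hi1k
    have hl2 := hlow (i:ℕ) (le_of_lt hik)
    have hu2 := hup (i:ℕ) (le_of_lt hik)
    have hcast : ((((i:ℕ) + 1):ℕ):ℝ)/(k:ℝ) = ((i:ℕ):ℝ)/(k:ℝ) + 1/(k:ℝ) := by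
      push_cast
      rw [add_div]
    rw [hcast] at hl1 hu1
    rw [abs_lt]
    constructor <;> linarith
end

section
/- For every non-atomic Radon measure μ on the Cantor space 2^ω there exists a continuous surjection f : 2^ω → 2^ω such that for every closed set S ⊆ 2^ω with λ(S) = 0 one has μ(f⁻¹(S)) = 0, where λ is the standard product (coin-flipping/Haar) measure on 2^ω. -/
open MeasureTheory Topology ENNReal NNReal

/-- The basic clopen cylinder `[v] ⊆ 2^ω` determined by a finite 0-1 sequence `v`. -/
def Cyl (v : List Bool) : Set (ℕ → Bool) := {x | ∀ i : Fin v.length, x i.val = v.get i}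

namespace Aux16

lemma mem_cyl_ofFn {n : ℕ} {v : Fin n → Bool} {x : ℕ → Bool} :
    x ∈ Cyl (List.ofFn v) ↔ ∀ i : Fin n, x i.val = v i := by
  simp only [Cyl, Set.mem_setOf_eq, List.get_ofFn]
  constructor
  · intro h i
    have := h (Fin.cast (List.length_ofFn (f := v)).symm i)
    simpa using this
  · intro h i
    have := h (Fin.cast (List.length_ofFn (f := v)) i)
    simpa using this

/-- the length-`n` prefix of `x` as a list -/
def pfx (x : ℕ → Bool) (n : ℕ) : List Bool := List.ofFn (fun i : Fin n => x i.val)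

lemma pfx_length (x : ℕ → Bool) (n : ℕ) : (pfx x n).length = n := List.length_ofFn

lemma mem_cyl_pfx (x : ℕ → Bool) (n : ℕ) : x ∈ Cyl (pfx x n) := mem_cyl_ofFn.2 fun _ => rfl

lemma pfx_succ (x : ℕ → Bool) (n : ℕ) : pfx x (n + 1) = pfx x n ++ [x n] := by
  rw [pfx, List.ofFn_succ', List.concat_eq_append]
  rfl

lemma isClopen_cyl (v : List Bool) : IsClopen (Cyl v) := by
  have : Cyl v = ⋂ i : Fin v.length, (fun x : ℕ → Bool => x i.val) ⁻¹' {v.get i} := by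
    ext x; simp [Cyl]
  rw [this]
  exact isClopen_iInter_of_finite fun i =>
    (isClopen_discrete _).preimage (continuous_apply _)

lemma measurableSet_cyl (v : List Bool) : MeasurableSet (Cyl v) :=
  (isClopen_cyl v).isOpen.measurableSet

lemma cyl_disjoint {n : ℕ} {v w : Fin n → Bool} (h : v ≠ w) :
    Disjoint (Cyl (List.ofFn v)) (Cyl (List.ofFn w)) := by
  rw [Set.disjoint_left]
  intro x hv hw
  apply h
  funext i
  rw [← mem_cyl_ofFn.1 hv i, ← mem_cyl_ofFn.1 hw i]

lemma cyl_pfx_subset {n m : ℕ} {v : Fin n → Bool} {x : ℕ → Bool}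
    (hx : x ∈ Cyl (List.ofFn v)) (hnm : n ≤ m) : Cyl (pfx x m) ⊆ Cyl (List.ofFn v) := by
  intro y hy
  refine mem_cyl_ofFn.2 fun i => ?_
  have hyi := mem_cyl_ofFn.1 hy ⟨i.val, lt_of_lt_of_le i.isLt hnm⟩
  rw [hyi]
  exact mem_cyl_ofFn.1 hx i

lemma cyl_pfx_antitone (x : ℕ → Bool) : Antitone (fun n => Cyl (pfx x n)) := by
  intro m n hmn
  exact cyl_pfx_subset (v := fun i : Fin m => x i.val) (mem_cyl_pfx x m) hmn

lemma iInter_cyl_pfx (x : ℕ → Bool) : ⋂ n, Cyl (pfx x n) = {x} := by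
  ext y
  simp only [Set.mem_iInter, Set.mem_singleton_iff]
  constructor
  · intro h
    funext i
    exact mem_cyl_ofFn.1 (h (i + 1)) ⟨i, Nat.lt_succ_self i⟩
  · rintro rfl n
    exact mem_cyl_pfx _ n

lemma exists_cyl_subset {O : Set (ℕ → Bool)} (hO : IsOpen O) {x : ℕ → Bool} (hx : x ∈ O) :
    ∃ n, Cyl (pfx x n) ⊆ O := by
  obtain ⟨I, u, hIu, hsub⟩ := isOpen_pi_iff.1 hO x hx
  refine ⟨I.sup id + 1, fun y hy => hsub ?_⟩
  intro i hi
  have hilt : i < I.sup id + 1 := Nat.lt_succ_of_le (Finset.le_sup (f := id) hi)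
  have := mem_cyl_ofFn.1 hy ⟨i, hilt⟩
  rw [this]
  exact (hIu i hi).2

lemma cyl_nil : Cyl ([] : List Bool) = Set.univ := by
  ext x; simp [Cyl]

lemma iUnion_cyl_ofFn (n : ℕ) : ⋃ v : Fin n → Bool, Cyl (List.ofFn v) = Set.univ := by
  refine Set.eq_univ_of_forall fun x => Set.mem_iUnion.2 ⟨fun i => x i.val, mem_cyl_pfx x n⟩


lemma pfx_get (x : ℕ → Bool) (n : ℕ) (i : Fin (pfx x n).length) :
    (pfx x n).get i = x i.val :=
  List.get_ofFn (fun j : Fin n => x j.val) i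

lemma mem_cyl_iff_pfx (x : ℕ → Bool) (v : List Bool) : x ∈ Cyl v ↔ pfx x v.length = v := by
  constructor
  · intro h
    apply List.ext_get (by rw [pfx_length])
    intro i h1 h2
    rw [pfx_get]
    exact h ⟨i, h2⟩

  · intro h i
    have h2 := List.get_of_eq h.symm i
    rw [pfx_get] at h2
    exact h2.symm

lemma small_cyl (μ : Measure (ℕ → Bool)) [IsFiniteMeasure μ] (hna : ∀ y : ℕ → Bool, μ {y} = 0)
    {ε : ℝ≥0∞} (hε : 0 < ε) : ∃ N : ℕ, ∀ v : Fin N → Bool, μ (Cyl (List.ofFn v)) < ε := by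
  have hpoint : ∀ x : ℕ → Bool, ∃ n, μ (Cyl (pfx x n)) < ε := by
    intro x
    have htend : Filter.Tendsto (fun n => μ (Cyl (pfx x n))) Filter.atTop (nhds (μ {x})) := by
      have := tendsto_measure_iInter_atTop (μ := μ) (s := fun n => Cyl (pfx x n))
        (fun n => (measurableSet_cyl _).nullMeasurableSet) (cyl_pfx_antitone x)
        ⟨0, measure_ne_top μ _⟩
      rwa [iInter_cyl_pfx] at this
    rw [hna x] at htend
    exact (htend.eventually_lt_const hε).exists
  choose n hn using hpoint
  obtain ⟨t, ht⟩ := isCompact_univ.elim_finite_subcover (fun x => Cyl (pfx x (n x)))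
    (fun x => (isClopen_cyl _).isOpen)
    (fun x _ => Set.mem_iUnion.2 ⟨x, mem_cyl_pfx x (n x)⟩)
  refine ⟨t.sup n + 1, fun v => ?_⟩
  set z : ℕ → Bool := fun i => if h : i < t.sup n + 1 then v ⟨i, h⟩ else false with hz
  have hzv : z ∈ Cyl (List.ofFn v) := mem_cyl_ofFn.2 fun i => by rw [hz]; exact dif_pos i.isLt
  obtain ⟨x₀, hx₀t, hx₀⟩ : ∃ x₀ ∈ t, z ∈ Cyl (pfx x₀ (n x₀)) := by
    have := ht (Set.mem_univ z)
    simpa using this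
  calc μ (Cyl (List.ofFn v)) ≤ μ (Cyl (pfx x₀ (n x₀))) := by
        apply measure_mono
        intro y hy
        have h1 : Cyl (pfx z (t.sup n + 1)) ⊆ Cyl (pfx x₀ (n x₀)) :=
          cyl_pfx_subset (v := fun i : Fin (n x₀) => x₀ i.val) hx₀
            (Nat.le_succ_of_le (Finset.le_sup hx₀t))
        apply h1
        refine mem_cyl_ofFn.2 fun i => ?_
        rw [mem_cyl_ofFn.1 hy i]
        rw [hz]; dsimp only; rw [dif_pos i.isLt]
    _ < ε := hn x₀

/-- split a clopen set into two pieces of nearly half measure -/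
lemma split_lemma (μ : Measure (ℕ → Bool)) [IsFiniteMeasure μ] (hna : ∀ y : ℕ → Bool, μ {y} = 0)
    {B : Set (ℕ → Bool)} (hB : IsClopen B) (hne : B.Nonempty) {ε : ℝ≥0∞} (hε : 0 < ε) :
    ∃ p : Set (ℕ → Bool) × Set (ℕ → Bool),
      IsClopen p.1 ∧ IsClopen p.2 ∧ p.1.Nonempty ∧ p.2.Nonempty ∧ Disjoint p.1 p.2 ∧
      p.1 ∪ p.2 = B ∧ μ p.1 ≤ μ B / 2 + ε ∧ μ p.2 ≤ μ B / 2 + ε := by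
  classical
  -- choose a level N with small cylinders and at least two nonempty pieces
  obtain ⟨N₀, hN₀⟩ := small_cyl μ hna hε
  obtain ⟨x, hxB⟩ := hne
  obtain ⟨n₁, hn₁⟩ := exists_cyl_subset hB.isOpen hxB
  set N := max N₀ (n₁ + 1) with hN
  have hsmall : ∀ v : Fin N → Bool, μ (Cyl (List.ofFn v)) < ε := by
    intro v
    set z : ℕ → Bool := fun i => if h : i < N then v ⟨i, h⟩ else false with hz
    have hzv : z ∈ Cyl (List.ofFn v) := mem_cyl_ofFn.2 fun i => by simp [hz, i.isLt]
    have h1 : Cyl (List.ofFn v) ⊆ Cyl (pfx z N₀) := by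
      intro y hy
      refine mem_cyl_ofFn.2 fun i => ?_
      rw [mem_cyl_ofFn.1 hy ⟨i.val, lt_of_lt_of_le i.isLt (le_max_left _ _)⟩]
      rw [hz]; dsimp only; rw [dif_pos (show (i : ℕ) < N from lt_of_lt_of_le i.isLt (le_max_left _ _))]
    exact lt_of_le_of_lt (measure_mono h1) (hN₀ _)
  -- the nonempty pieces
  set piece : (Fin N → Bool) → Set (ℕ → Bool) := fun v => B ∩ Cyl (List.ofFn v) with hpiece
  set S : Finset (Fin N → Bool) := Finset.univ.filter (fun v => (piece v).Nonempty) with hS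
  have hpiececlopen : ∀ v, IsClopen (piece v) := fun v => hB.inter (isClopen_cyl _)
  have hB_eq : ∀ (t : Finset (Fin N → Bool)), S ⊆ t → (⋃ v ∈ t, piece v) = B := by
    intro t hts
    apply Set.Subset.antisymm
    · exact Set.iUnion₂_subset fun v _ => Set.inter_subset_left
    · intro y hyB
      have hvS : (fun i : Fin N => y i.val) ∈ S := by
        simp only [hS, Finset.mem_filter, Finset.mem_univ, true_and]
        exact ⟨y, hyB, mem_cyl_pfx y N⟩
      exact Set.mem_biUnion (hts hvS) ⟨hyB, mem_cyl_pfx y N⟩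
  have hdisj : ∀ (t : Finset (Fin N → Bool)), (↑t : Set _).PairwiseDisjoint piece := by
    intro t v _ w _ hvw
    exact Disjoint.mono Set.inter_subset_right Set.inter_subset_right (cyl_disjoint hvw)
  have hsum : ∀ (t : Finset (Fin N → Bool)), μ (⋃ v ∈ t, piece v) = ∑ v ∈ t, μ (piece v) :=
    fun t => measure_biUnion_finset (hdisj t)
      (fun v _ => (hpiececlopen v).isOpen.measurableSet)
  have hT : μ B = ∑ v ∈ S, μ (piece v) := by rw [← hsum S, hB_eq S subset_rfl]
  have hmsmall : ∀ v, μ (piece v) < ε := fun v =>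
    lt_of_le_of_lt (measure_mono Set.inter_subset_right) (hsmall v)
  -- at least two pieces
  have hcard : 1 < S.card := by
    set z₀ : ℕ → Bool := fun i => if i = n₁ then false else x i with hz₀
    set z₁ : ℕ → Bool := fun i => if i = n₁ then true else x i with hz₁
    have hmem : ∀ b : Bool, (fun i => if i = n₁ then b else x i) ∈ B := by
      intro b
      apply hn₁
      refine mem_cyl_ofFn.2 fun i => ?_
      have : (i : ℕ) ≠ n₁ := Nat.ne_of_lt i.isLt
      simp [this]
    have h0 : (fun i : Fin N => z₀ i.val) ∈ S := by
      simp only [hS, Finset.mem_filter, Finset.mem_univ, true_and]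
      exact ⟨z₀, hmem false, mem_cyl_pfx z₀ N⟩
    have h1 : (fun i : Fin N => z₁ i.val) ∈ S := by
      simp only [hS, Finset.mem_filter, Finset.mem_univ, true_and]
      exact ⟨z₁, hmem true, mem_cyl_pfx z₁ N⟩
    have hne01 : (fun i : Fin N => z₀ i.val) ≠ (fun i : Fin N => z₁ i.val) := by
      intro h
      have hn₁N : n₁ < N := lt_of_lt_of_le (Nat.lt_succ_self n₁) (le_max_right _ _)
      have := congrFun h ⟨n₁, hn₁N⟩
      simp [hz₀, hz₁] at this
    exact Finset.one_lt_card.2 ⟨_, h0, _, h1, hne01⟩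
  obtain ⟨s₀, hs₀S⟩ : S.Nonempty := Finset.card_pos.1 (by omega)
  set S' : Finset (Fin N → Bool) := S.erase s₀ with hS'
  have hS'sub : S' ⊆ S := Finset.erase_subset _ _
  have hS'ne : S'.Nonempty := by
    rw [← Finset.card_pos, hS', Finset.card_erase_of_mem hs₀S]; omega
  set P : Finset (Finset (Fin N → Bool)) :=
    S'.powerset.filter (fun u => ∑ v ∈ u, μ (piece v) ≤ μ B / 2) with hP
  have hPne : P.Nonempty := ⟨∅, by simp [hP]⟩
  obtain ⟨S₀, hS₀P, hS₀max⟩ := P.exists_max_image Finset.card hPne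
  have hS₀sub : S₀ ⊆ S' := Finset.mem_powerset.1 (Finset.mem_filter.1 hS₀P).1
  have hS₀le : ∑ v ∈ S₀, μ (piece v) ≤ μ B / 2 := (Finset.mem_filter.1 hS₀P).2
  have hpieceS : ∀ v ∈ S, (piece v).Nonempty := by
    intro v hv
    exact (Finset.mem_filter.1 hv).2
  have hfin : μ B / 2 ≠ ⊤ := by
    intro h
    exact (measure_ne_top μ B) (by simpa using (ENNReal.div_eq_top.1 h))
  by_cases hcase : S₀ = S'
  · -- the maximizer is everything outside s₀
    refine ⟨(piece s₀, ⋃ v ∈ S', piece v), hpiececlopen s₀,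
      (S' : Set _).toFinite.isClopen_biUnion (fun v _ => hpiececlopen v),
      hpieceS s₀ hs₀S, ?_, ?_, ?_, ?_, ?_⟩
    · obtain ⟨w, hw⟩ := hS'ne
      obtain ⟨y, hy⟩ := hpieceS w (hS'sub hw)
      exact ⟨y, Set.mem_biUnion hw hy⟩
    · rw [Set.disjoint_iUnion₂_right]
      intro v hv
      have hvne : s₀ ≠ v := by rintro rfl; exact Finset.notMem_erase s₀ S hv
      exact Disjoint.mono Set.inter_subset_right Set.inter_subset_right (cyl_disjoint hvne)
    · show piece s₀ ∪ (⋃ v ∈ S', piece v) = B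
      rw [← Finset.set_biUnion_insert, Finset.insert_erase hs₀S]
      exact hB_eq S subset_rfl
    · exact le_trans (hmsmall s₀).le le_add_self
    · refine le_trans ?_ le_self_add
      rw [hsum S']
      rw [hcase] at hS₀le
      exact hS₀le
  · obtain ⟨w, hwS', hwS₀⟩ := Finset.not_subset.1
      (fun h => hcase (Finset.Subset.antisymm hS₀sub h))
    have hwgt : μ B / 2 < μ (piece w) + ∑ v ∈ S₀, μ (piece v) := by
      by_contra hle
      push_neg at hle
      have hle' : ∑ v ∈ insert w S₀, μ (piece v) ≤ μ B / 2 := by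
        rw [Finset.sum_insert hwS₀]; exact hle
      have hmemP : insert w S₀ ∈ P := Finset.mem_filter.2
        ⟨Finset.mem_powerset.2 (Finset.insert_subset hwS' hS₀sub), hle'⟩
      have := hS₀max _ hmemP
      rw [Finset.card_insert_of_notMem hwS₀] at this
      omega
    refine ⟨(⋃ v ∈ insert s₀ S₀, piece v, ⋃ v ∈ S' \ S₀, piece v),
      (↑(insert s₀ S₀) : Set _).toFinite.isClopen_biUnion (fun v _ => hpiececlopen v),
      (↑(S' \ S₀) : Set _).toFinite.isClopen_biUnion (fun v _ => hpiececlopen v),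
      ?_, ?_, ?_, ?_, ?_, ?_⟩
    · obtain ⟨y, hy⟩ := hpieceS s₀ hs₀S
      exact ⟨y, Set.mem_biUnion (Finset.mem_insert_self _ _) hy⟩
    · obtain ⟨y, hy⟩ := hpieceS w (hS'sub hwS')
      exact ⟨y, Set.mem_biUnion (Finset.mem_sdiff.2 ⟨hwS', hwS₀⟩) hy⟩
    · rw [Set.disjoint_iUnion₂_right]
      intro v hv
      rw [Set.disjoint_iUnion₂_left]
      intro u hu
      have hune : u ≠ v := by
        rintro rfl
        rcases Finset.mem_insert.1 hu with h | h
        · rw [h] at hv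
          exact Finset.notMem_erase s₀ S (Finset.mem_sdiff.1 hv).1
        · exact (Finset.mem_sdiff.1 hv).2 h
      exact Disjoint.mono Set.inter_subset_right Set.inter_subset_right (cyl_disjoint hune)
    · show (⋃ v ∈ insert s₀ S₀, piece v) ∪ (⋃ v ∈ S' \ S₀, piece v) = B
      rw [← Finset.set_biUnion_union]
      have : insert s₀ S₀ ∪ S' \ S₀ = S := by
        rw [Finset.insert_union, Finset.union_sdiff_of_subset hS₀sub, Finset.insert_erase hs₀S]
      rw [this]
      exact hB_eq S subset_rfl
    · refine le_trans (measure_biUnion_finset_le _ _) ?_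
      rw [Finset.sum_insert (fun h => Finset.notMem_erase s₀ S (hS₀sub h))]
      rw [add_comm (μ B / 2) ε]
      exact add_le_add (hmsmall s₀).le hS₀le
    · refine le_trans (measure_biUnion_finset_le _ _) ?_
      rw [← ENNReal.add_le_add_iff_right hfin]
      calc (∑ v ∈ S' \ S₀, μ (piece v)) + μ B / 2
          ≤ (∑ v ∈ S' \ S₀, μ (piece v)) + (μ (piece w) + ∑ v ∈ S₀, μ (piece v)) :=
            add_le_add_right hwgt.le _
        _ ≤ (∑ v ∈ S' \ S₀, μ (piece v)) + (ε + ∑ v ∈ S₀, μ (piece v)) :=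
            add_le_add_right (add_le_add_left (hmsmall w).le _) _
        _ = ((∑ v ∈ S' \ S₀, μ (piece v)) + ∑ v ∈ S₀, μ (piece v)) + ε := by ring
        _ = (∑ v ∈ S', μ (piece v)) + ε := by rw [Finset.sum_sdiff hS₀sub]
        _ ≤ ((∑ v ∈ S', μ (piece v)) + μ (piece s₀)) + ε := by
            exact add_le_add_left le_self_add ε
        _ = μ B + ε := by rw [hS', Finset.sum_erase_add S _ hs₀S, ← hT]
        _ = μ B / 2 + ε + μ B / 2 := by
            rw [add_comm (μ B / 2) ε, add_assoc, ENNReal.add_halves, add_comm ε (μ B)]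

noncomputable def eps (n : ℕ) : ℝ≥0∞ := 2⁻¹ ^ (2 * n + 2)

lemma eps_pos (n : ℕ) : 0 < eps n := by
  apply ENNReal.pow_pos
  simp

open Classical in
noncomputable def splitPair (μ : Measure (ℕ → Bool)) (B : Set (ℕ → Bool)) (ε : ℝ≥0∞) :
    Set (ℕ → Bool) × Set (ℕ → Bool) :=
  if h : IsFiniteMeasure μ ∧ (∀ y : ℕ → Bool, μ {y} = 0) ∧ IsClopen B ∧ B.Nonempty ∧ 0 < ε then
    (@split_lemma μ h.1 h.2.1 B h.2.2.1 h.2.2.2.1 ε h.2.2.2.2).choose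
  else (B, ∅)

lemma splitPair_spec (μ : Measure (ℕ → Bool)) [hfm : IsFiniteMeasure μ]
    (hna : ∀ y : ℕ → Bool, μ {y} = 0) {B : Set (ℕ → Bool)} (hB : IsClopen B)
    (hne : B.Nonempty) {ε : ℝ≥0∞} (hε : 0 < ε) :
    IsClopen (splitPair μ B ε).1 ∧ IsClopen (splitPair μ B ε).2 ∧
    (splitPair μ B ε).1.Nonempty ∧ (splitPair μ B ε).2.Nonempty ∧
    Disjoint (splitPair μ B ε).1 (splitPair μ B ε).2 ∧
    (splitPair μ B ε).1 ∪ (splitPair μ B ε).2 = B ∧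
    μ (splitPair μ B ε).1 ≤ μ B / 2 + ε ∧ μ (splitPair μ B ε).2 ≤ μ B / 2 + ε := by
  have h : IsFiniteMeasure μ ∧ (∀ y : ℕ → Bool, μ {y} = 0) ∧ IsClopen B ∧ B.Nonempty ∧ 0 < ε :=
    ⟨hfm, hna, hB, hne, hε⟩
  rw [splitPair, dif_pos h]
  exact (@split_lemma μ h.1 h.2.1 B h.2.2.1 h.2.2.2.1 ε h.2.2.2.2).choose_spec

/-- the tree of clopen sets, indexed by *reversed* finite words -/
noncomputable def Af (μ : Measure (ℕ → Bool)) : List Bool → Set (ℕ → Bool)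
  | [] => Set.univ
  | b :: l => if b then (splitPair μ (Af μ l) (eps l.length)).2
              else (splitPair μ (Af μ l) (eps l.length)).1

/-- the tree of clopen sets, indexed by finite words -/
noncomputable def Aset (μ : Measure (ℕ → Bool)) (v : List Bool) : Set (ℕ → Bool) :=
  Af μ v.reverse

lemma Aset_nil (μ : Measure (ℕ → Bool)) : Aset μ [] = Set.univ := rfl

lemma Aset_append (μ : Measure (ℕ → Bool)) (v : List Bool) (b : Bool) :
    Aset μ (v ++ [b]) = if b then (splitPair μ (Aset μ v) (eps v.length)).2
      else (splitPair μ (Aset μ v) (eps v.length)).1 := by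
  rw [Aset, List.reverse_concat, Af, Aset, List.length_reverse]

section Tree

variable (μ : Measure (ℕ → Bool)) [IsProbabilityMeasure μ]

lemma Af_inv (hna : ∀ y : ℕ → Bool, μ {y} = 0) : ∀ l : List Bool, IsClopen (Af μ l) ∧ (Af μ l).Nonempty ∧
      μ (Af μ l) + 2⁻¹ ^ (2 * l.length) ≤ 2 * 2⁻¹ ^ l.length := by
  intro l
  induction l with
  | nil =>
    refine ⟨isClopen_univ, Set.univ_nonempty, ?_⟩
    simp [Af, measure_univ]
    norm_num
  | cons b l ih =>
    obtain ⟨hclop, hne, hmeas⟩ := ih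
    obtain ⟨h1, h2, h3, h4, h5, h6, h7, h8⟩ := splitPair_spec μ hna hclop hne (eps_pos l.length)
    set q : ℝ≥0∞ := 2⁻¹ with hq
    have hq2 : (2 : ℝ≥0∞) * q = 1 := ENNReal.mul_inv_cancel two_ne_zero (by norm_num)
    have key : μ (Af μ l) / 2 + eps l.length + q ^ (2 * (l.length + 1))
        ≤ 2 * q ^ (l.length + 1) := by
      calc μ (Af μ l) / 2 + eps l.length + q ^ (2 * (l.length + 1))
          = q * μ (Af μ l) + (2 * q) * q ^ (2 * l.length + 1) := by
            rw [ENNReal.div_eq_inv_mul, eps, show 2 * (l.length + 1) = 2 * l.length + 2 by ring]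
            ring
        _ = q * μ (Af μ l) + 1 * q ^ (2 * l.length + 1) := by rw [hq2]
        _ = q * (μ (Af μ l) + q ^ (2 * l.length)) := by ring
        _ ≤ q * (2 * q ^ l.length) := mul_le_mul_right hmeas q
        _ = 2 * q ^ (l.length + 1) := by ring
    have hlen : (b :: l).length = l.length + 1 := rfl
    have hAf : Af μ (b :: l) = if b then (splitPair μ (Af μ l) (eps l.length)).2
        else (splitPair μ (Af μ l) (eps l.length)).1 := rfl
    rw [hAf, hlen]
    cases b
    · simp only [if_neg Bool.false_ne_true]
      exact ⟨h1, h3, le_trans (add_le_add_left (le_trans h7 le_rfl) _) key⟩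
    · simp only [if_pos rfl]
      exact ⟨h2, h4, le_trans (add_le_add_left h8 _) key⟩

lemma Aset_isClopen (hna : ∀ y : ℕ → Bool, μ {y} = 0) (v : List Bool) : IsClopen (Aset μ v) := (Af_inv μ hna v.reverse).1

lemma Aset_nonempty (hna : ∀ y : ℕ → Bool, μ {y} = 0) (v : List Bool) : (Aset μ v).Nonempty := (Af_inv μ hna v.reverse).2.1

lemma Aset_measure_le (hna : ∀ y : ℕ → Bool, μ {y} = 0) (v : List Bool) : μ (Aset μ v) ≤ 2 * 2⁻¹ ^ v.length := by
  have := (Af_inv μ hna v.reverse).2.2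
  rw [List.length_reverse] at this
  exact le_trans le_self_add this

lemma Aset_union (hna : ∀ y : ℕ → Bool, μ {y} = 0) (v : List Bool) :
    Aset μ (v ++ [false]) ∪ Aset μ (v ++ [true]) = Aset μ v := by
  rw [Aset_append, Aset_append, if_neg Bool.false_ne_true, if_pos rfl]
  exact (splitPair_spec μ hna (Aset_isClopen μ hna v) (Aset_nonempty μ hna v)
    (eps_pos v.length)).2.2.2.2.2.1

lemma Aset_disjoint (hna : ∀ y : ℕ → Bool, μ {y} = 0) (v : List Bool) :
    Disjoint (Aset μ (v ++ [false])) (Aset μ (v ++ [true])) := by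
  rw [Aset_append, Aset_append, if_neg Bool.false_ne_true, if_pos rfl]
  exact (splitPair_spec μ hna (Aset_isClopen μ hna v) (Aset_nonempty μ hna v)
    (eps_pos v.length)).2.2.2.2.1

lemma Aset_subset (hna : ∀ y : ℕ → Bool, μ {y} = 0) (v : List Bool) (b : Bool) : Aset μ (v ++ [b]) ⊆ Aset μ v := by
  rw [← Aset_union μ hna v]
  cases b
  · exact Set.subset_union_left
  · exact Set.subset_union_right

end Tree

/-- the itinerary of `x` through the tree: the word of length `n` tracking which
pieces `x` belongs to -/
noncomputable def pfxA (μ : Measure (ℕ → Bool)) (x : ℕ → Bool) : ℕ → List Bool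
  | 0 => []
  | n + 1 => pfxA μ x n ++
      [@decide (x ∈ Aset μ (pfxA μ x n ++ [true])) (Classical.propDecidable _)]

/-- the coded point -/
noncomputable def fA (μ : Measure (ℕ → Bool)) (x : ℕ → Bool) (n : ℕ) : Bool :=
  @decide (x ∈ Aset μ (pfxA μ x n ++ [true])) (Classical.propDecidable _)

lemma pfxA_succ (μ : Measure (ℕ → Bool)) (x : ℕ → Bool) (n : ℕ) :
    pfxA μ x (n + 1) = pfxA μ x n ++ [fA μ x n] := rfl

lemma pfxA_length (μ : Measure (ℕ → Bool)) (x : ℕ → Bool) (n : ℕ) :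
    (pfxA μ x n).length = n := by
  induction n with
  | zero => rfl
  | succ n ih => rw [pfxA_succ, List.length_append, ih]; rfl

lemma fA_eq_true_iff (μ : Measure (ℕ → Bool)) (x : ℕ → Bool) (n : ℕ) :
    fA μ x n = true ↔ x ∈ Aset μ (pfxA μ x n ++ [true]) := by
  rw [fA]; exact @decide_eq_true_iff _ (Classical.propDecidable _)

section Code

variable (μ : Measure (ℕ → Bool)) [IsProbabilityMeasure μ]

lemma mem_Aset_pfxA (hna : ∀ y : ℕ → Bool, μ {y} = 0) (x : ℕ → Bool) (n : ℕ) :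
    x ∈ Aset μ (pfxA μ x n) := by
  induction n with
  | zero => rw [pfxA, Aset_nil]; trivial
  | succ n ih =>
    rw [pfxA_succ]
    by_cases h : x ∈ Aset μ (pfxA μ x n ++ [true])
    · rw [(fA_eq_true_iff μ x n).2 h]; exact h
    · have hfalse : fA μ x n = false :=
        Bool.eq_false_iff.2 fun hh => h ((fA_eq_true_iff μ x n).1 hh)
      rw [hfalse]
      rw [← Aset_union μ hna (pfxA μ x n)] at ih
      rcases ih with h' | h'
      · exact h'
      · exact absurd h' h

lemma fA_eq_iff (hna : ∀ y : ℕ → Bool, μ {y} = 0) (x : ℕ → Bool) (n : ℕ) (b : Bool) :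
    fA μ x n = b ↔ x ∈ Aset μ (pfxA μ x n ++ [b]) := by
  cases b
  · rw [← Bool.not_eq_true, fA_eq_true_iff]
    constructor
    · intro h
      have hm := mem_Aset_pfxA μ hna x n
      rw [← Aset_union μ hna (pfxA μ x n)] at hm
      rcases hm with h' | h'
      · exact h'
      · exact absurd h' h
    · intro h hmem
      exact Set.disjoint_left.1 (Aset_disjoint μ hna (pfxA μ x n)) h hmem
  · exact fA_eq_true_iff μ x n

lemma mem_Aset_iff_pfxA (hna : ∀ y : ℕ → Bool, μ {y} = 0) (v : List Bool) (x : ℕ → Bool) :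
    x ∈ Aset μ v ↔ pfxA μ x v.length = v := by
  induction v using List.reverseRecOn with
  | nil => simp [Aset_nil, pfxA]
  | append_singleton v b ih =>
    rw [List.length_append, List.length_singleton]
    constructor
    · intro h
      have hv : pfxA μ x v.length = v := ih.1 (Aset_subset μ hna v b h)
      have h2 : x ∈ Aset μ (v ++ [fA μ x v.length]) := by
        have := (fA_eq_iff μ hna x v.length (fA μ x v.length)).1 rfl
        rwa [hv] at this
      have hfb : fA μ x v.length = b := by
        cases b
        · cases hb2 : fA μ x v.length
          · rfl
          · rw [hb2] at h2
            exact absurd h2 (Set.disjoint_left.1 (Aset_disjoint μ hna v) h)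
        · cases hb2 : fA μ x v.length
          · rw [hb2] at h2
            exact absurd h (Set.disjoint_left.1 (Aset_disjoint μ hna v) h2)
          · rfl
      rw [pfxA_succ, hv, hfb]
    · intro h
      have h1 : x ∈ Aset μ (pfxA μ x (v.length + 1)) := mem_Aset_pfxA μ hna x _
      rwa [h] at h1

lemma pfxA_eq_ofFn (x : ℕ → Bool) (n : ℕ) :
    pfxA μ x n = List.ofFn (fun i : Fin n => fA μ x i.val) := by
  induction n with
  | zero => rfl
  | succ n ih =>
    rw [pfxA_succ, List.ofFn_succ', List.concat_eq_append, ih]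
    rfl

lemma pfx_fA (x : ℕ → Bool) (n : ℕ) : pfx (fA μ x) n = pfxA μ x n :=
  (pfxA_eq_ofFn μ x n).symm

lemma preimage_cyl (hna : ∀ y : ℕ → Bool, μ {y} = 0) (v : List Bool) :
    (fun x => fA μ x) ⁻¹' Cyl v = Aset μ v := by
  ext x
  rw [Set.mem_preimage, mem_cyl_iff_pfx, pfx_fA, ← mem_Aset_iff_pfxA μ hna]

end Code

section Main

variable (μ : Measure (ℕ → Bool)) [IsProbabilityMeasure μ]

lemma fA_fiber (hna : ∀ y : ℕ → Bool, μ {y} = 0) (n : ℕ) (b : Bool) :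
    (fun x => fA μ x n) ⁻¹' {b} = ⋃ (v : List Bool) (_ : v.length = n), Aset μ (v ++ [b]) := by
  ext x
  simp only [Set.mem_preimage, Set.mem_singleton_iff, Set.mem_iUnion]
  constructor
  · intro h
    refine ⟨pfxA μ x n, pfxA_length μ x n, ?_⟩
    exact (fA_eq_iff μ hna x n b).1 h
  · rintro ⟨v, hlen, hmem⟩
    have hx : x ∈ Aset μ v := Aset_subset μ hna v b hmem
    have hfx : pfxA μ x n = v := by
      rw [← hlen]
      exact (mem_Aset_iff_pfxA μ hna v x).1 hx
    rw [fA_eq_iff μ hna x n b, hfx]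
    exact hmem

lemma fA_continuous (hna : ∀ y : ℕ → Bool, μ {y} = 0) : Continuous (fun x => fA μ x) := by
  apply continuous_pi
  intro n
  rw [continuous_discrete_rng]
  intro b
  rw [fA_fiber μ hna n b]
  exact isOpen_iUnion fun v => isOpen_iUnion fun _ => (Aset_isClopen μ hna _).isOpen

lemma fA_surjective (hna : ∀ y : ℕ → Bool, μ {y} = 0) : Function.Surjective (fun x => fA μ x) := by
  intro y
  have hsub : ∀ n, Aset μ (pfx y (n + 1)) ⊆ Aset μ (pfx y n) := by
    intro n
    rw [pfx_succ]
    exact Aset_subset μ hna _ _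
  obtain ⟨x, hx⟩ := IsCompact.nonempty_iInter_of_sequence_nonempty_isCompact_isClosed
    (fun n => Aset μ (pfx y n)) hsub (fun n => Aset_nonempty μ hna _)
    ((Aset_isClopen μ hna _).isClosed.isCompact)
    (fun n => (Aset_isClopen μ hna _).isClosed)
  have hxn : ∀ n, x ∈ Aset μ (pfx y n) := by
    intro n
    exact Set.mem_iInter.1 hx n
  have hpfx : ∀ n, pfxA μ x n = pfx y n := by
    intro n
    have := (mem_Aset_iff_pfxA μ hna (pfx y n) x).1 (hxn n)
    rwa [pfx_length] at this
  refine ⟨x, ?_⟩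
  funext n
  show fA μ x n = y n
  rw [fA_eq_iff μ hna x n (y n), hpfx n, ← pfx_succ]
  exact hxn (n + 1)

end Main

end Aux16


/-- For every non-atomic Radon measure `μ` on the Cantor space `2^ω` there
is a continuous surjection `f : 2^ω → 2^ω` such that `μ (f⁻¹ S) = 0` for every closed
`λ`-null set `S`, where `λ` is the standard coin-flipping measure on `2^ω` (the unique Borel
measure giving each basic clopen `[v]`, `v ∈ 2^n`, measure `2⁻ⁿ`). -/
theorem exists_continuous_surjection_pulling_null_to_null
    (lam : Measure (ℕ → Bool))
    (hlam : ∀ v : List Bool, lam (Cyl v) = (1 / 2 : ℝ≥0∞) ^ v.length)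
    (μ : Measure (ℕ → Bool)) (hμ : IsRadon μ) (hna : ∀ y : ℕ → Bool, μ {y} = 0) :
    ∃ f : (ℕ → Bool) → (ℕ → Bool), Continuous f ∧ Function.Surjective f ∧
      ∀ S : Set (ℕ → Bool), IsClosed S → lam S = 0 → μ (f ⁻¹' S) = 0 := by
  classical
  obtain ⟨hprob, -, -⟩ := hμ
  haveI := hprob
  refine ⟨fun x => Aux16.fA μ x, Aux16.fA_continuous μ hna, Aux16.fA_surjective μ hna, ?_⟩
  intro S hS hlamS
  set K : (n : ℕ) → Finset (Fin n → Bool) :=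
    fun n => Finset.univ.filter (fun v => Cyl (List.ofFn v) ⊆ Sᶜ) with hK
  set U : ℕ → Set (ℕ → Bool) := fun n => ⋃ v ∈ K n, Cyl (List.ofFn v) with hU
  have hKmem : ∀ {n : ℕ} {v : Fin n → Bool}, v ∈ K n ↔ Cyl (List.ofFn v) ⊆ Sᶜ := by
    intro n v
    simp [hK]
  have hUmono : Monotone U := by
    apply monotone_nat_of_le_succ
    intro n x hx
    obtain ⟨v, hvK, hxv⟩ := Set.mem_iUnion₂.1 hx
    apply Set.mem_biUnion (show (fun i : Fin (n+1) => x i.val) ∈ K (n+1) from ?_)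
      (Aux16.mem_cyl_pfx x (n+1))
    rw [hKmem]
    intro y hy
    apply hKmem.1 hvK
    refine Aux16.mem_cyl_ofFn.2 fun i => ?_
    have hyx : y i.val = x i.val :=
      Aux16.mem_cyl_ofFn.1 hy ⟨i.val, Nat.lt_succ_of_lt i.isLt⟩
    rw [hyx]
    exact Aux16.mem_cyl_ofFn.1 hxv i
  have hUnionU : ⋃ n, U n = Sᶜ := by
    apply Set.Subset.antisymm
    · exact Set.iUnion_subset fun n => Set.iUnion₂_subset fun v hv => hKmem.1 hv
    · intro x hx
      obtain ⟨n, hn⟩ := Aux16.exists_cyl_subset hS.isOpen_compl hx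
      refine Set.mem_iUnion.2 ⟨n, Set.mem_biUnion ?_ (Aux16.mem_cyl_pfx x n)⟩
      exact hKmem.2 hn
  have hlamU : ∀ n, lam (U n) = ((K n).card : ℝ≥0∞) * (1 / 2 : ℝ≥0∞) ^ n := by
    intro n
    rw [hU]
    rw [measure_biUnion_finset
      (fun v _ w _ hvw => Aux16.cyl_disjoint hvw)
      (fun v _ => Aux16.measurableSet_cyl _)]
    rw [Finset.sum_congr rfl (fun v _ => by rw [hlam, List.length_ofFn])]
    rw [Finset.sum_const, nsmul_eq_mul]
  have hlamSc : lam Sᶜ = 1 := by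
    have huniv : lam Set.univ = 1 := by
      have := hlam []
      rw [Aux16.cyl_nil] at this
      simpa using this
    apply le_antisymm
    · rw [← huniv]; exact measure_mono (Set.subset_univ _)
    · calc (1 : ℝ≥0∞) = lam (S ∪ Sᶜ) := by rw [Set.union_compl_self, huniv]
        _ ≤ lam S + lam Sᶜ := measure_union_le _ _
        _ = lam Sᶜ := by rw [hlamS, zero_add]
  have htend : Filter.Tendsto (fun n => lam (U n)) Filter.atTop (nhds 1) := by
    have := tendsto_measure_iUnion_atTop (μ := lam) hUmono
    rwa [hUnionU, hlamSc] at this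
  apply le_antisymm _ zero_le
  apply ENNReal.le_of_forall_pos_le_add
  intro ε hε _
  set δ : ℝ≥0∞ := min ((ε : ℝ≥0∞) / 2) 2⁻¹ with hδ
  have hδ0 : δ ≠ 0 := by
    have h01 : (0:ℝ≥0∞) < δ :=
      lt_min (ENNReal.div_pos (by exact_mod_cast hε.ne') (by norm_num)) (by norm_num)
    exact h01.ne' 
  have hδtop : δ ≠ ⊤ := ne_top_of_le_ne_top (by norm_num) (min_le_right _ _)
  have h1δ : 1 - δ < 1 := ENNReal.sub_lt_self one_ne_top one_ne_zero hδ0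
  obtain ⟨n, hn⟩ := ((tendsto_order.1 htend).1 (1 - δ) h1δ).exists
  rw [hlamU n] at hn
  set c : ℝ≥0∞ := (2 : ℝ≥0∞)⁻¹ ^ n with hc
  have hhalf : (1 / 2 : ℝ≥0∞) ^ n = c := by rw [hc, one_div]
  rw [hhalf] at hn
  set k : ℕ := (K n).card with hk
  set m : ℕ := Fintype.card (Fin n → Bool) with hm
  have hkm : k ≤ m := by
    rw [hk, hm, ← Finset.card_univ]
    exact Finset.card_filter_le _ _
  have hmc : (m : ℝ≥0∞) * c = 1 := by
    rw [hm, hc, Fintype.card_fun, Fintype.card_bool, Fintype.card_fin, Nat.cast_pow,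
      Nat.cast_ofNat, ← mul_pow, ENNReal.mul_inv_cancel two_ne_zero (by norm_num), one_pow]
  have hab : (k : ℝ≥0∞) * c + ((m - k : ℕ) : ℝ≥0∞) * c = 1 := by
    rw [← add_mul, ← Nat.cast_add, Nat.add_sub_cancel' hkm, hmc]
  have hane : (k : ℝ≥0∞) * c ≠ ⊤ :=
    ENNReal.mul_ne_top (ENNReal.natCast_ne_top k) (ENNReal.pow_ne_top (by norm_num))
  have hblt : ((m - k : ℕ) : ℝ≥0∞) * c < δ := by
    have h1 : (1 : ℝ≥0∞) < δ + (k : ℝ≥0∞) * c :=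
      ENNReal.lt_add_of_sub_lt_left (Or.inl one_ne_top) hn
    rw [← hab, add_comm δ ((k : ℝ≥0∞) * c)] at h1
    exact (ENNReal.add_lt_add_iff_left hane).1 h1
  have hcov : (fun x => Aux16.fA μ x) ⁻¹' S ⊆
      ⋃ v ∈ (Finset.univ \ K n), Aux16.Aset μ (List.ofFn v) := by
    intro x hx
    have hw : (fun i : Fin n => Aux16.fA μ x i.val) ∉ K n := by
      intro hmem
      exact (hKmem.1 hmem (Aux16.mem_cyl_pfx (Aux16.fA μ x) n)) hx
    refine Set.mem_biUnion (Finset.mem_sdiff.2 ⟨Finset.mem_univ _, hw⟩) ?_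
    rw [← Aux16.preimage_cyl μ hna]
    exact Aux16.mem_cyl_pfx (Aux16.fA μ x) n
  calc μ ((fun x => Aux16.fA μ x) ⁻¹' S)
      ≤ μ (⋃ v ∈ Finset.univ \ K n, Aux16.Aset μ (List.ofFn v)) := measure_mono hcov
    _ ≤ ∑ v ∈ Finset.univ \ K n, μ (Aux16.Aset μ (List.ofFn v)) := measure_biUnion_finset_le _ _
    _ ≤ ∑ _v ∈ Finset.univ \ K n, 2 * c := by
        refine Finset.sum_le_sum fun v _ => ?_
        have hb := Aux16.Aset_measure_le μ hna (List.ofFn v)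
        rwa [List.length_ofFn] at hb
    _ = ((m - k : ℕ) : ℝ≥0∞) * (2 * c) := by
        rw [Finset.sum_const, nsmul_eq_mul, Finset.card_sdiff_of_subset (Finset.subset_univ _),
          Finset.card_univ]
    _ = 2 * (((m - k : ℕ) : ℝ≥0∞) * c) := by ring
    _ ≤ 2 * δ := mul_le_mul_right hblt.le _
    _ ≤ 2 * ((ε : ℝ≥0∞) / 2) := mul_le_mul_right (min_le_left _ _) _
    _ = ε := ENNReal.mul_div_cancel two_ne_zero (by norm_num)
    _ = 0 + ε := (zero_add _).symm
end
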